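/- arXiv:2503.07895 — 7 statements merged into one kernel-verified Lean document; each statement's English description precedes it below -/
import Mathlib

section
/- Let m ∈ ℕ and let f be holomorphic on an open neighborhood of 0 in ℂ, with Taylor expansion f(z) = Σ_{k≥0} a_k z^k at 0. The following are equivalent: (i) for every n ∈ ℕ, the function T^n f obtained by iterating the operator T : h ↦ (z ↦ h′(z)·z^{−m}) (each iterate defined and holomorphic on a punctured neighborhood of 0) extends holomorphically to 0; (ii) a_k = 0 for every k not divisible by m + 1; (iii) there exists a function g holomorphic on a neighborhood of 0 in ℂ such that f(z) = g(z^{m+1}/(m+1)) for all z in a neighborhood of 0. -/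
open Complex Metric Filter Set Topology ENNReal NNReal

section Aux

open FormalMultilinearSeries

lemma my_ofScalars_coeff (c : ℕ → ℂ) (n : ℕ) :
    (FormalMultilinearSeries.ofScalars ℂ c).coeff n = c n := by
  rw [FormalMultilinearSeries.coeff, FormalMultilinearSeries.ofScalars]
  simp [List.prod_ofFn]

lemma my_hasFPowerSeriesAt_of_hasSum {c : ℕ → ℂ} {h : ℂ → ℂ}
    (hs : ∀ᶠ z in 𝓝 (0:ℂ), HasSum (fun k : ℕ => c k * z ^ k) (h z)) :
    HasFPowerSeriesAt h (FormalMultilinearSeries.ofScalars ℂ c) 0 := by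
  rw [hasFPowerSeriesAt_iff]
  filter_upwards [hs] with z hz
  simpa [my_ofScalars_coeff, smul_eq_mul, mul_comm] using hz

lemma my_hasSum_of_hasFPowerSeriesAt {c : ℕ → ℂ} {h : ℂ → ℂ}
    (hp : HasFPowerSeriesAt h (FormalMultilinearSeries.ofScalars ℂ c) 0) :
    ∀ᶠ z in 𝓝 (0:ℂ), HasSum (fun k : ℕ => c k * z ^ k) (h z) := by
  rw [hasFPowerSeriesAt_iff] at hp
  filter_upwards [hp] with z hz
  simpa [my_ofScalars_coeff, smul_eq_mul, mul_comm] using hz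

lemma my_deriv_hasSum {c : ℕ → ℂ} {h : ℂ → ℂ}
    (hp : HasFPowerSeriesAt h (FormalMultilinearSeries.ofScalars ℂ c) 0) :
    ∀ᶠ z in 𝓝 (0:ℂ), HasSum (fun k : ℕ => (k : ℂ) * c k * z ^ k) (z * deriv h z) := by
  obtain ⟨R, hR⟩ := hp
  have hd := hR.fderiv
  filter_upwards [EMetric.ball_mem_nhds (0:ℂ) hR.r_pos] with z hz
  have h1 : HasSum
      (fun n => ((FormalMultilinearSeries.ofScalars ℂ c).derivSeries n fun _ => z))
      (fderiv ℂ h (0 + z)) := hd.hasSum hz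
  have h2 := (ContinuousLinearMap.apply ℂ ℂ z).hasSum h1
  have h3 : ∀ n : ℕ, (ContinuousLinearMap.apply ℂ ℂ z)
      ((FormalMultilinearSeries.ofScalars ℂ c).derivSeries n fun _ => z)
      = ((n:ℂ) + 1) * c (n + 1) * z ^ (n + 1) := by
    intro n
    have hds := FormalMultilinearSeries.derivSeries_apply_diag
      (FormalMultilinearSeries.ofScalars ℂ c) n z
    simp only [ContinuousLinearMap.apply_apply]
    rw [hds, FormalMultilinearSeries.ofScalars_apply_eq]
    simp only [nsmul_eq_mul, smul_eq_mul]
    push_cast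
    ring
  have h4 : (ContinuousLinearMap.apply ℂ ℂ z) (fderiv ℂ h (0 + z)) = z * deriv h z := by
    rw [zero_add]
    simp only [ContinuousLinearMap.apply_apply]
    have hm := (fderiv ℂ h z).map_smul z (1:ℂ)
    simp only [smul_eq_mul, mul_one] at hm
    rw [hm, ← fderiv_apply_one_eq_deriv]
  rw [h4] at h2
  simp only [h3] at h2
  have h2' : HasSum (fun n : ℕ => (((n+1 : ℕ) : ℂ)) * c (n+1) * z ^ (n+1)) (z * deriv h z) := by
    convert h2 using 2 with n
    · rfl
    push_cast
    ring
  have h5 := (hasSum_nat_add_iff (f := fun k : ℕ => (k : ℂ) * c k * z ^ k) 1).mp h2'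
  simpa using h5

noncomputable def gIter (m : ℕ) (f : ℂ → ℂ) : ℕ → ℂ → ℂ
  | 0 => f
  | n+1 => fun z => z * deriv (gIter m f n) z - ((n * (m+1) : ℕ) : ℂ) * gIter m f n z

def bIter (m : ℕ) (a : ℕ → ℂ) : ℕ → ℕ → ℂ
  | 0 => a
  | n+1 => fun k => ((k : ℂ) - ((n * (m+1) : ℕ) : ℂ)) * bIter m a n k

lemma gIter_series (m : ℕ) (f : ℂ → ℂ) (a : ℕ → ℂ)
    (h0 : HasFPowerSeriesAt f (FormalMultilinearSeries.ofScalars ℂ a) 0) :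
    ∀ n, HasFPowerSeriesAt (gIter m f n) (FormalMultilinearSeries.ofScalars ℂ (bIter m a n)) 0 := by
  intro n
  induction n with
  | zero => exact h0
  | succ n ih =>
      apply my_hasFPowerSeriesAt_of_hasSum
      filter_upwards [my_deriv_hasSum ih, my_hasSum_of_hasFPowerSeriesAt ih] with z h1 h2
      have e : (fun k : ℕ => bIter m a (n+1) k * z ^ k)
          = fun k : ℕ => (k:ℂ) * bIter m a n k * z ^ k
            - ((n*(m+1):ℕ):ℂ) * (bIter m a n k * z ^ k) := by
        funext k; simp only [bIter]; ring
      show HasSum _ (gIter m f (n+1) z)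
      rw [e, show gIter m f (n+1) z
        = z * deriv (gIter m f n) z - ((n*(m+1):ℕ):ℂ) * gIter m f n z from rfl]
      exact h1.sub (h2.mul_left _)

lemma gIter_iterate (m : ℕ) (f : ℂ → ℂ) (a : ℕ → ℂ)
    (h0 : HasFPowerSeriesAt f (FormalMultilinearSeries.ofScalars ℂ a) 0)
    (T : (ℂ → ℂ) → (ℂ → ℂ)) (hT : ∀ h : ℂ → ℂ, ∀ z : ℂ, T h z = deriv h z / z ^ m) :
    ∀ n, ∀ᶠ z in 𝓝[≠] (0:ℂ),
      T^[n] f z = gIter m f n z * z ^ (-((n * (m+1) : ℕ) : ℤ)) := by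
  intro n
  induction n with
  | zero => filter_upwards with z; simp [gIter]
  | succ n ih =>
    have han : ∀ᶠ z in 𝓝 (0:ℂ), AnalyticAt ℂ (gIter m f n) z :=
      (gIter_series m f a h0 n).analyticAt.eventually_analyticAt
    rw [eventually_nhdsWithin_iff] at ih ⊢
    obtain ⟨ε, hε, hball⟩ := Metric.eventually_nhds_iff.mp (ih.and han)
    rw [Metric.eventually_nhds_iff]
    refine ⟨ε, hε, fun {z} hzε hz0 => ?_⟩
    have hz0' : z ≠ 0 := by simpa using hz0
    have hGz : AnalyticAt ℂ (gIter m f n) z := (hball hzε).2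
    have hderiv : deriv (T^[n] f) z
        = deriv (fun w => gIter m f n w * w ^ (-((n * (m+1) : ℕ) : ℤ))) z := by
      apply Filter.EventuallyEq.deriv_eq
      have hmem : (Metric.ball (0:ℂ) ε ∩ {(0:ℂ)}ᶜ) ∈ 𝓝 z :=
        (Metric.isOpen_ball.inter isOpen_compl_singleton).mem_nhds
          ⟨by simpa [Metric.mem_ball] using hzε, hz0⟩
      filter_upwards [hmem] with w hw
      exact (hball (by simpa [Metric.mem_ball] using hw.1)).1 hw.2
    have hzp := hasDerivAt_zpow (-((n * (m+1) : ℕ) : ℤ)) z (Or.inl hz0')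
    have hD : HasDerivAt (fun w => gIter m f n w * w ^ (-((n * (m+1) : ℕ) : ℤ))) _ z :=
      (hGz.differentiableAt.hasDerivAt).mul hzp
    rw [Function.iterate_succ_apply', hT, hderiv, hD.deriv,
      show gIter m f (n+1) z
        = z * deriv (gIter m f n) z - ((n * (m+1) : ℕ) : ℂ) * gIter m f n z from rfl]
    rw [div_eq_mul_inv, ← zpow_natCast z m, ← zpow_neg]
    rw [show (-(((n+1) * (m+1) : ℕ) : ℤ)) = ((-((n * (m+1) : ℕ) : ℤ) - 1) + (-(m:ℤ))) by
      push_cast; ring]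
    rw [zpow_add₀ hz0']
    rw [show z ^ (-((n * (m+1) : ℕ) : ℤ)) = z ^ (-((n * (m+1) : ℕ) : ℤ) - 1) * z by
      rw [← zpow_add_one₀ hz0']; ring_nf]
    generalize z ^ (-((n * (m+1) : ℕ) : ℤ) - 1) = u
    generalize z ^ (-(m : ℤ)) = v
    push_cast
    ring

lemma bIter_ne_zero (m : ℕ) (a : ℕ → ℂ) {k : ℕ} (hk : ¬ (m+1) ∣ k) (hak : a k ≠ 0) :
    ∀ n, bIter m a n k ≠ 0 := by
  intro n
  induction n with
  | zero => exact hak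
  | succ n ih =>
    simp only [bIter]
    refine mul_ne_zero ?_ ih
    rw [sub_ne_zero]
    intro hEq
    have : k = n * (m+1) := by exact_mod_cast hEq
    exact hk ⟨n, by rw [this, Nat.mul_comm]⟩

lemma bIter_eq_zero_of_a_eq_zero (m : ℕ) (a : ℕ → ℂ) {k : ℕ} (hak : a k = 0) :
    ∀ n, bIter m a n k = 0 := by
  intro n
  induction n with
  | zero => exact hak
  | succ n ih => simp only [bIter, ih, mul_zero]

lemma bIter_eq_zero_of_lt (m : ℕ) (a : ℕ → ℂ) (hvan : ∀ k, ¬ (m+1) ∣ k → a k = 0)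
    {k : ℕ} : ∀ {n : ℕ}, k < n * (m+1) → bIter m a n k = 0 := by
  intro n
  induction n with
  | zero => omega
  | succ n ih =>
    intro hk
    simp only [bIter]
    by_cases h1 : k < n * (m+1)
    · rw [ih h1, mul_zero]
    · by_cases h2 : (m+1) ∣ k
      · obtain ⟨q, hq⟩ := h2
        have hqn : q = n := by
          have hub : q < n + 1 := by
            by_contra hq'
            push_neg at hq'
            nlinarith [hq, hk]
          have hlb : n ≤ q := by
            by_contra hq'
            push_neg at hq'
            have : k < n * (m+1) := by nlinarith
            exact h1 this
          omega
        have : k = n * (m+1) := by rw [hq, hqn, Nat.mul_comm]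
        rw [this]
        push_cast
        ring
      · rw [bIter_eq_zero_of_a_eq_zero m a (hvan k h2), mul_zero]

end Aux

/-- **Local factorisation criterion (Lemma 3.1 in a local chart).** For `f`
holomorphic near `0` with Taylor coefficients `a k`, and the operator
`T : h ↦ (z ↦ h′(z)·z^{−m})`, the following are equivalent: (i) no iterate
`T^[n] f` develops a pole at `0`; (ii) `a k = 0` unless `(m+1) ∣ k`;
(iii) `f` is locally factorised as `g (z^{m+1}/(m+1))` for some `g`
holomorphic near `0`. -/
theorem local_factorisation_criterion
    (m : ℕ) (f : ℂ → ℂ) (r : ℝ) (hr : 0 < r)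
    (hf : DifferentiableOn ℂ f (Metric.ball (0 : ℂ) r))
    (a : ℕ → ℂ)
    (ha : ∀ z ∈ Metric.ball (0 : ℂ) r, HasSum (fun k : ℕ => a k * z ^ k) (f z))
    (T : (ℂ → ℂ) → (ℂ → ℂ)) (hT : ∀ h : ℂ → ℂ, ∀ z : ℂ, T h z = deriv h z / z ^ m) :
    ((∀ n : ℕ, ∃ F : ℂ → ℂ, AnalyticAt ℂ F 0 ∧ ∀ᶠ z in 𝓝[≠] (0 : ℂ), T^[n] f z = F z)
        ↔ (∀ k : ℕ, ¬ (m + 1) ∣ k → a k = 0))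
    ∧ ((∀ k : ℕ, ¬ (m + 1) ∣ k → a k = 0)
        ↔ (∃ g : ℂ → ℂ, AnalyticAt ℂ g 0 ∧
            ∀ᶠ z in 𝓝 (0 : ℂ), f z = g (z ^ (m + 1) / ((m : ℂ) + 1)))) := by
  classical
  have hball : Metric.ball (0:ℂ) r ∈ 𝓝 (0:ℂ) := Metric.ball_mem_nhds _ hr
  have hfp : HasFPowerSeriesAt f (FormalMultilinearSeries.ofScalars ℂ a) 0 :=
    my_hasFPowerSeriesAt_of_hasSum (eventually_of_mem hball ha)
  have hinj : Function.Injective (fun j : ℕ => (m+1) * j) := fun x y hxy => by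
    simpa using Nat.eq_of_mul_eq_mul_left (Nat.succ_pos m) hxy
  have habs : ‖((m:ℂ)+1)‖ = (m:ℝ)+1 := by
    rw [show ((m:ℂ)+1) = ((m+1:ℕ):ℂ) by push_cast; ring]
    rw [Complex.norm_natCast]
    push_cast
    ring
  have hdm : ((m:ℂ)+1) ≠ 0 := Nat.cast_add_one_ne_zero m
  constructor
  · constructor
    · -- (i) → (ii)
      intro hi k hk
      by_contra hak
      obtain ⟨F, hF, hFeq⟩ := hi (k+1)
      have hQ := gIter_iterate m f a hfp T hT (k+1)
      set n := k + 1 with hn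
      set N := n * (m+1) with hNdef
      have hkN : k < N := by
        rw [hNdef, hn]
        have h1 : k + 1 ≤ (k+1) * (m+1) := Nat.le_mul_of_pos_right (k+1) (by omega)
        omega
      have hpunct : ∀ᶠ z in 𝓝[≠] (0:ℂ), gIter m f n z = F z * z ^ N := by
        filter_upwards [hQ, hFeq, self_mem_nhdsWithin] with z h1 h2 hz
        have hz0 : z ≠ 0 := hz
        have hzN : z ^ N ≠ 0 := pow_ne_zero _ hz0
        have h3 : gIter m f n z * (z ^ N)⁻¹ = F z := by
          rw [← h2, h1, zpow_neg, zpow_natCast]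
        rw [← h3]
        field_simp
      have hGn := gIter_series m f a hfp n
      have hval : gIter m f n 0 = F 0 * 0 ^ N := by
        refine tendsto_nhds_unique (l := 𝓝[≠] (0:ℂ))
          hGn.analyticAt.continuousAt.continuousWithinAt ?_
        have hpunct' : gIter m f n =ᶠ[𝓝[≠] (0:ℂ)] (fun z => F z * z ^ N) := hpunct
        exact Filter.Tendsto.congr' hpunct'.symm
          ((hF.continuousAt.mul ((continuous_pow N).continuousAt)).continuousWithinAt)
      have h2 : gIter m f n =ᶠ[𝓝 (0:ℂ)] fun z => F z * z ^ N := by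
        have hev := eventually_nhdsWithin_iff.mp hpunct
        filter_upwards [hev] with z hz
        rcases eq_or_ne z 0 with rfl | hz0
        · exact hval
        · exact hz hz0
      obtain ⟨q, hq⟩ := hF
      have hq' := hasFPowerSeriesAt_iff.mp hq
      have hsum2 : ∀ᶠ w in 𝓝 (0:ℂ), HasSum
          (fun kk : ℕ => (if N ≤ kk then q.coeff (kk - N) else 0) * w ^ kk) (F w * w ^ N) := by
        filter_upwards [hq'] with w hw
        rw [zero_add] at hw
        have h1 : HasSum ((fun kk : ℕ => (if N ≤ kk then q.coeff (kk - N) else 0) * w ^ kk)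
            ∘ (fun j : ℕ => j + N)) (F w * w ^ N) := by
          have hmul := hw.mul_right (w ^ N)
          convert hmul using 2 with j
          · rfl
          simp only [Function.comp_apply, if_pos (Nat.le_add_left N j), Nat.add_sub_cancel,
            pow_add, smul_eq_mul]
          ring
        have h0 : ∀ kk ∉ Set.range (fun j : ℕ => j + N),
            (if N ≤ kk then q.coeff (kk - N) else 0) * w ^ kk = 0 := by
          intro kk hkk
          have hle : ¬ N ≤ kk := fun hle => hkk ⟨kk - N, by show kk - N + N = kk; omega⟩
          rw [if_neg hle, zero_mul]
        exact ((add_left_injective N).hasSum_iff h0).mp h1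
      have hps2 := my_hasFPowerSeriesAt_of_hasSum hsum2
      have hps1 : HasFPowerSeriesAt (fun z => F z * z ^ N)
          (FormalMultilinearSeries.ofScalars ℂ (bIter m a n)) 0 := hGn.congr h2
      have hbn := FormalMultilinearSeries.ofScalars_series_injective (𝕜 := ℂ) (E := ℂ)
        (hps1.eq_formalMultilinearSeries hps2)
      have hzero : bIter m a n k = 0 := by
        rw [hbn]
        simp [Nat.not_le.mpr hkN]
      exact bIter_ne_zero m a hk hak n hzero
    · -- (ii) → (i)
      intro hii n
      refine ⟨fun z => if z = 0 then bIter m a n (n * (m+1))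
        else gIter m f n z * (z ^ (n * (m+1)))⁻¹, ?_, ?_⟩
      · refine HasFPowerSeriesAt.analyticAt (my_hasFPowerSeriesAt_of_hasSum
          (c := fun k => bIter m a n (k + n * (m+1))) ?_)
        filter_upwards [my_hasSum_of_hasFPowerSeriesAt (gIter_series m f a hfp n)] with z hz
        rcases eq_or_ne z 0 with rfl | h
        · rw [if_pos rfl]
          have hs := hasSum_single (f := fun k : ℕ => bIter m a n (k + n * (m+1)) * (0:ℂ)^k) 0
            (fun b' hb' => by simp [zero_pow hb'])
          simpa using hs
        · rw [if_neg h]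
          have hzero : ∑ i ∈ Finset.range (n * (m+1)), bIter m a n i * z ^ i = 0 :=
            Finset.sum_eq_zero fun i hi => by
              rw [bIter_eq_zero_of_lt m a hii (Finset.mem_range.mp hi), zero_mul]
          have h1 : HasSum (fun k : ℕ => bIter m a n (k + n * (m+1)) * z ^ (k + n * (m+1)))
              (gIter m f n z) := by
            refine (hasSum_nat_add_iff (f := fun k : ℕ => bIter m a n k * z ^ k) _).mpr ?_
            rw [hzero, add_zero]
            exact hz
          have h2 := h1.mul_right ((z ^ (n * (m+1)))⁻¹)
          convert h2 using 2 with k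
          · rfl
          rw [pow_add, mul_assoc, mul_assoc, mul_inv_cancel₀ (pow_ne_zero _ h), mul_one]
      · filter_upwards [gIter_iterate m f a hfp T hT n, self_mem_nhdsWithin] with z h1 hz
        have hz0 : z ≠ 0 := hz
        rw [h1]
        simp only [if_neg hz0]
        rw [zpow_neg, zpow_natCast]
  · constructor
    · -- (ii) → (iii)
      intro hii
      obtain ⟨R, hR⟩ := hfp
      obtain ⟨t, ht0, htR⟩ := ENNReal.lt_iff_exists_nnreal_btwn.mp hR.r_pos
      have ht0' : (0:ℝ) < (t:ℝ) := by
        have := ENNReal.coe_pos.mp ht0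
        exact_mod_cast this
      have hrad : (t : ℝ≥0∞) < (FormalMultilinearSeries.ofScalars ℂ a).radius :=
        htR.trans_le hR.r_le
      have hsummable : Summable (fun k : ℕ => ‖a k‖ * (t:ℝ)^k) := by
        have h := (FormalMultilinearSeries.ofScalars ℂ a).summable_norm_mul_pow hrad
        simpa [FormalMultilinearSeries.ofScalars_norm, my_ofScalars_coeff] using h
      set ρ : ℝ := (t:ℝ)^(m+1) / ((m:ℝ)+1) with hρdef
      have hρ : 0 < ρ := by positivity
      have hsum : ∀ w : ℂ, ‖w‖ ≤ ρ →
          Summable (fun j => (a ((m+1)*j) * ((m:ℂ)+1)^j) * w ^ j) := by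
        intro w hw
        have hcomp : Summable ((fun k : ℕ => ‖a k‖ * (t:ℝ)^k) ∘ (fun j : ℕ => (m+1)*j)) :=
          hsummable.comp_injective hinj
        refine Summable.of_norm_bounded hcomp ?_
        intro j
        simp only [Function.comp_apply, norm_mul, norm_pow, habs]
        have hb : ((m:ℝ)+1)^j * ‖w‖^j ≤ ((t:ℝ)^(m+1))^j := by
          rw [← mul_pow]
          apply pow_le_pow_left₀ (by positivity)
          calc ((m:ℝ)+1) * ‖w‖ ≤ ((m:ℝ)+1) * ρ := by nlinarith [norm_nonneg w]
          _ = (t:ℝ)^(m+1) := by rw [hρdef]; field_simp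
        calc ‖a ((m+1)*j)‖ * ((m:ℝ)+1)^j * ‖w‖^j
            ≤ ‖a ((m+1)*j)‖ * ((t:ℝ)^(m+1))^j := by
              rw [mul_assoc]
              exact mul_le_mul_of_nonneg_left hb (norm_nonneg _)
          _ = ‖a ((m+1)*j)‖ * (t:ℝ)^((m+1)*j) := by rw [← pow_mul]
      refine ⟨fun w => ∑' j, (a ((m+1)*j) * ((m:ℂ)+1)^j) * w ^ j, ?_, ?_⟩
      · refine HasFPowerSeriesAt.analyticAt (my_hasFPowerSeriesAt_of_hasSum
          (c := fun j => a ((m+1)*j) * ((m:ℂ)+1)^j) ?_)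
        filter_upwards [Metric.ball_mem_nhds (0:ℂ) hρ] with w hw
        exact (hsum w (le_of_lt (by simpa [Metric.mem_ball, dist_zero_right] using hw))).hasSum
      · filter_upwards [Metric.ball_mem_nhds (0:ℂ) ht0', hball] with z hzt hzr
        have hznorm : ‖z‖ < (t:ℝ) := by simpa [Metric.mem_ball, dist_zero_right] using hzt
        have hfz : HasSum (fun k : ℕ => a k * z^k) (f z) := ha z hzr
        have h0 : ∀ k ∉ Set.range (fun j : ℕ => (m+1) * j), a k * z^k = 0 := by
          intro k hkr
          rw [hii k (fun hd => hkr (by obtain ⟨j, hj⟩ := hd; exact ⟨j, hj.symm⟩)), zero_mul]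
        have hfz2 : HasSum ((fun k : ℕ => a k * z^k) ∘ (fun j : ℕ => (m+1)*j)) (f z) :=
          (hinj.hasSum_iff h0).mpr hfz
        have hwle : ‖z ^ (m+1) / ((m:ℂ)+1)‖ ≤ ρ := by
          rw [norm_div, norm_pow, habs, hρdef]
          apply div_le_div_of_nonneg_right ?_ (by positivity)
          · exact pow_le_pow_left₀ (norm_nonneg z) hznorm.le _
        have hgz := (hsum _ hwle).hasSum
        have hterm : ∀ j : ℕ, (a ((m+1)*j) * ((m:ℂ)+1)^j) * (z^(m+1)/((m:ℂ)+1))^j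
            = a ((m+1)*j) * z^((m+1)*j) := by
          intro j
          rw [div_pow, pow_mul]
          field_simp
        have hfz3 : HasSum (fun j : ℕ => (a ((m+1)*j) * ((m:ℂ)+1)^j) * (z^(m+1)/((m:ℂ)+1))^j)
            (f z) := by
          rw [show (fun j : ℕ => (a ((m+1)*j) * ((m:ℂ)+1)^j) * (z^(m+1)/((m:ℂ)+1))^j)
            = (fun j : ℕ => a ((m+1)*j) * z^((m+1)*j)) from funext hterm]
          exact hfz2
        exact hfz3.unique hgz ▸ hfz3.tsum_eq.symm
    · -- (iii) → (ii)
      rintro ⟨g, hg, hfeq⟩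
      obtain ⟨q, hq⟩ := hg
      have hq' := hasFPowerSeriesAt_iff.mp hq
      set a' : ℕ → ℂ := fun k => if (m+1) ∣ k
        then q.coeff (k/(m+1)) / ((m:ℂ)+1)^(k/(m+1)) else 0 with ha'def
      have hφcont : Filter.Tendsto (fun z : ℂ => z^(m+1)/((m:ℂ)+1)) (𝓝 0) (𝓝 0) := by
        have hco : Continuous (fun z : ℂ => z^(m+1)/((m:ℂ)+1)) := by fun_prop
        have := hco.tendsto 0
        simpa [zero_pow (Nat.succ_ne_zero m)] using this
      have hfp2 : HasFPowerSeriesAt f (FormalMultilinearSeries.ofScalars ℂ a') 0 := by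
        apply my_hasFPowerSeriesAt_of_hasSum
        filter_upwards [hfeq, hφcont.eventually hq'] with z hz1 hz2
        rw [zero_add] at hz2
        have hterm : ∀ j : ℕ, a' ((m+1)*j) * z ^ ((m+1)*j)
            = (z^(m+1)/((m:ℂ)+1))^j • q.coeff j := by
          intro j
          rw [ha'def]
          simp only [if_pos (dvd_mul_right (m+1) j),
            Nat.mul_div_cancel_left j (Nat.succ_pos m)]
          rw [smul_eq_mul, div_pow, pow_mul]
          field_simp
        have h1 : HasSum ((fun k : ℕ => a' k * z^k) ∘ (fun j : ℕ => (m+1)*j)) (f z) := by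
          rw [hz1]
          convert hz2 using 1
          · rfl
          funext j
          simp only [Function.comp_apply]
          exact hterm j
        have h0 : ∀ k ∉ Set.range (fun j : ℕ => (m+1)*j), a' k * z^k = 0 := by
          intro k hkr
          have hnd : ¬ (m+1) ∣ k := fun ⟨j, hj⟩ => hkr ⟨j, hj.symm⟩
          rw [ha'def]
          simp [hnd]
        exact (hinj.hasSum_iff h0).mp h1
      have haa := FormalMultilinearSeries.ofScalars_series_injective (𝕜 := ℂ) (E := ℂ)
        (hfp.eq_formalMultilinearSeries hfp2)
      intro k hk
      rw [haa, ha'def]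
      simp [hk]
end

section
/- Let a ∈ ℕ, m ≥ 1, and let f be holomorphic on a punctured disk D(0,r) ∖ {0} with a pole of order m at 0 (i.e. z^m f(z) extends holomorphically to 0 with nonzero value there). Define f₀ = f and f_{n+1}(z) = f_n′(z)·z^{−a} on the punctured disk. Then for every n ∈ ℕ, f_n has a pole of order exactly m + n(a + 1) at 0. Moreover: (a) if instead g₀ = f and g_{n+1}(z) = z·g_n′(z), then g_n has a pole of order exactly m at 0 for every n; (b) if s ≥ 2 is an integer, h₀ = f and h_{n+1}(z) = z^s·h_n′(z), then there exists N ∈ ℕ such that h_n extends holomorphically to 0 for all n ≥ N. -/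
open Complex Metric Filter Set Topology

/-- The derivative of a function analytic at `0` is analytic at `0`. -/
lemma analyticAt_deriv' {g : ℂ → ℂ} (hg : AnalyticAt ℂ g 0) :
    AnalyticAt ℂ (deriv g) 0 := by
  have h2 : AnalyticAt ℂ ((ContinuousLinearMap.apply ℂ ℂ (1 : ℂ)) ∘ (fderiv ℂ g)) 0 :=
    ((ContinuousLinearMap.apply ℂ ℂ (1 : ℂ)).analyticAt _).comp hg.fderiv
  have h3 : deriv g = (ContinuousLinearMap.apply ℂ ℂ (1 : ℂ)) ∘ (fderiv ℂ g) := by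
    funext z
    simp [Function.comp, ContinuousLinearMap.apply_apply, fderiv_apply_one_eq_deriv]
  rw [h3]; exact h2

/-- Derivative of a local Laurent-type expression `g z * z ^ t` on a punctured
neighbourhood of `0`. -/
lemma key_deriv_step (g f : ℂ → ℂ) (hg : AnalyticAt ℂ g 0) (t : ℤ)
    (hf : ∀ᶠ z in 𝓝[≠] (0 : ℂ), f z = g z * z ^ t) :
    ∀ᶠ z in 𝓝[≠] (0 : ℂ),
      deriv f z = (z * deriv g z + (t : ℂ) * g z) * z ^ (t - 1) := by
  have hg' : ∀ᶠ z in 𝓝 (0 : ℂ), DifferentiableAt ℂ g z :=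
    hg.eventually_analyticAt.mono fun z hz => hz.differentiableAt
  have hf' : ∀ᶠ z in 𝓝 (0 : ℂ), z ≠ 0 → f z = g z * z ^ t := by
    simpa [eventually_nhdsWithin_iff] using hf
  filter_upwards [(hf'.eventually_nhds).filter_mono nhdsWithin_le_nhds,
    hg'.filter_mono nhdsWithin_le_nhds, self_mem_nhdsWithin] with z hfz hgz hz
  have hz : z ≠ 0 := hz
  have heq : f =ᶠ[𝓝 z] fun w => g w * w ^ t := by
    filter_upwards [hfz,
      isOpen_compl_singleton.eventually_mem
        (show z ∈ ({0}ᶜ : Set ℂ) from hz)] with w hw hw0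
    exact hw hw0
  rw [heq.deriv_eq]
  have h1 : HasDerivAt (fun w : ℂ => w ^ t) ((t : ℂ) * z ^ (t - 1)) z :=
    hasDerivAt_zpow t z (Or.inl hz)
  have h2 : HasDerivAt g (deriv g z) z := hgz.hasDerivAt
  rw [(show HasDerivAt (fun w => g w * w ^ t) (deriv g z * z ^ t + g z * ((t : ℂ) * z ^ (t - 1))) z from h2.mul h1).deriv]
  have hzt : (z : ℂ) ^ t = z ^ (t - 1) * z := by
    rw [← zpow_add_one₀ hz, sub_add_cancel]
  rw [hzt]; ring

/-- Iterating `Φ_{n+1} = (Φ_n)' · z^c` starting from `g₀ z * z ^ t₀`. -/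
lemma iter_pole (Φ : ℕ → ℂ → ℂ) (c t₀ : ℤ) (g₀ : ℂ → ℂ)
    (hg₀ : AnalyticAt ℂ g₀ 0)
    (h0 : ∀ᶠ z in 𝓝[≠] (0 : ℂ), Φ 0 z = g₀ z * z ^ t₀)
    (hstep : ∀ n, ∀ᶠ z in 𝓝[≠] (0 : ℂ), Φ (n + 1) z = deriv (Φ n) z * z ^ c)
    (n : ℕ) :
    ∃ g : ℂ → ℂ, AnalyticAt ℂ g 0 ∧
      (g₀ 0 ≠ 0 → (∀ i : ℕ, i < n → t₀ + i * (c - 1) ≠ 0) → g 0 ≠ 0) ∧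
      ∀ᶠ z in 𝓝[≠] (0 : ℂ), Φ n z = g z * z ^ (t₀ + n * (c - 1)) := by
  induction n with
  | zero => exact ⟨g₀, hg₀, fun h _ => h, by simpa using h0⟩
  | succ n ih =>
    obtain ⟨g, hg, hg0, heq⟩ := ih
    set t : ℤ := t₀ + n * (c - 1) with ht_def
    refine ⟨fun z => z * deriv g z + (t : ℂ) * g z, ?_, ?_, ?_⟩
    · exact (analyticAt_id.mul (analyticAt_deriv' hg)).add (analyticAt_const.mul hg)
    · intro h0' hall
      have hgn : g 0 ≠ 0 := hg0 h0' fun i hi => hall i (Nat.lt_succ_of_lt hi)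
      have ht : t ≠ 0 := hall n (Nat.lt_succ_self n)
      show (0 : ℂ) * deriv g 0 + (t : ℂ) * g 0 ≠ 0
      rw [zero_mul, zero_add]
      exact mul_ne_zero (by exact_mod_cast ht) hgn
    · have hd := key_deriv_step g (Φ n) hg t heq
      filter_upwards [hstep n, hd, self_mem_nhdsWithin] with z h1 h2 hz
      have hz : z ≠ 0 := hz
      rw [h1, h2]
      have he : t₀ + ((n : ℕ) + 1 : ℕ) * (c - 1) = (t - 1) + c := by
        rw [ht_def]; push_cast; ring
      rw [he, zpow_add₀ hz]; ring_nf

/-- **Growth of pole orders under the local models of `T_ω` (Proposition 3.3,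
local charts).** If `f` has a pole of order `m ≥ 1` at `0`, then: the iterates
`f_{n+1}(z) = f_n′(z)·z^{−a}` have a pole of order exactly `m + n(a+1)` at `0`;
(a) the iterates `g_{n+1}(z) = z·g_n′(z)` have a pole of order exactly `m`;
(b) for `s ≥ 2`, the iterates `h_{n+1}(z) = z^s·h_n′(z)` eventually extend
holomorphically to `0`. -/
theorem pole_order_growth_local
    (a m s : ℕ) (hm : 1 ≤ m) (hs : 2 ≤ s)
    (r : ℝ) (hr : 0 < r) (f : ℂ → ℂ)
    (hf : DifferentiableOn ℂ f (Metric.ball (0 : ℂ) r \ {0}))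
    (g₀ : ℂ → ℂ) (hg₀ : AnalyticAt ℂ g₀ 0) (hg₀0 : g₀ 0 ≠ 0)
    (hfg : ∀ᶠ z in 𝓝[≠] (0 : ℂ), f z = g₀ z / z ^ m)
    (F G H : ℕ → ℂ → ℂ)
    (hF0 : F 0 = f) (hFs : ∀ n : ℕ, ∀ z : ℂ, F (n + 1) z = deriv (F n) z / z ^ a)
    (hG0 : G 0 = f) (hGs : ∀ n : ℕ, ∀ z : ℂ, G (n + 1) z = z * deriv (G n) z)
    (hH0 : H 0 = f) (hHs : ∀ n : ℕ, ∀ z : ℂ, H (n + 1) z = z ^ s * deriv (H n) z) :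
    (∀ n : ℕ, ∃ g : ℂ → ℂ, AnalyticAt ℂ g 0 ∧ g 0 ≠ 0 ∧
        ∀ᶠ z in 𝓝[≠] (0 : ℂ), F n z = g z / z ^ (m + n * (a + 1)))
    ∧ (∀ n : ℕ, ∃ g : ℂ → ℂ, AnalyticAt ℂ g 0 ∧ g 0 ≠ 0 ∧
        ∀ᶠ z in 𝓝[≠] (0 : ℂ), G n z = g z / z ^ m)
    ∧ (∃ N : ℕ, ∀ n ≥ N, ∃ g : ℂ → ℂ, AnalyticAt ℂ g 0 ∧
        ∀ᶠ z in 𝓝[≠] (0 : ℂ), H n z = g z) := by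
  have hm' : (1 : ℤ) ≤ (m : ℤ) := by exact_mod_cast hm
  -- initial data in `zpow` form
  have hinit : ∀ (Φ : ℕ → ℂ → ℂ), Φ 0 = f →
      ∀ᶠ z in 𝓝[≠] (0 : ℂ), Φ 0 z = g₀ z * z ^ (-(m : ℤ)) := by
    intro Φ h0
    filter_upwards [hfg, self_mem_nhdsWithin] with z hz hz0
    have hz0 : z ≠ 0 := hz0
    rw [h0, hz, div_eq_mul_inv, ← zpow_natCast z m, ← zpow_neg]
  refine ⟨?_, ?_, ?_⟩
  · -- F part : c = -a
    intro n
    have hstep : ∀ k, ∀ᶠ z in 𝓝[≠] (0 : ℂ),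
        F (k + 1) z = deriv (F k) z * z ^ (-(a : ℤ)) := by
      intro k
      filter_upwards [self_mem_nhdsWithin] with z hz
      have hz : z ≠ 0 := hz
      rw [hFs k z, div_eq_mul_inv, ← zpow_natCast z a, ← zpow_neg]
    obtain ⟨g, hg, hval, heq⟩ :=
      iter_pole F (-(a : ℤ)) (-(m : ℤ)) g₀ hg₀ (hinit F hF0) hstep n
    refine ⟨g, hg, ?_, ?_⟩
    · refine hval hg₀0 fun i _ => ?_
      have hi0 : (0 : ℤ) ≤ (i : ℤ) := Int.natCast_nonneg i
      have ha0 : (0 : ℤ) ≤ (a : ℤ) := Int.natCast_nonneg a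
      have : (i : ℤ) * (-(a : ℤ) - 1) ≤ 0 :=
        mul_nonpos_of_nonneg_of_nonpos hi0 (by linarith)
      intro hc; linarith [hc ▸ (show -(m : ℤ) + (i : ℤ) * (-(a : ℤ) - 1) ≤ -1 by linarith)]
    · filter_upwards [heq, self_mem_nhdsWithin] with z hz hz0
      have hz0 : z ≠ 0 := hz0
      rw [hz, div_eq_mul_inv, ← zpow_natCast z (m + n * (a + 1)), ← zpow_neg]
      congr 1
      push_cast; ring
  · -- G part : c = 1
    intro n
    have hstep : ∀ k, ∀ᶠ z in 𝓝[≠] (0 : ℂ),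
        G (k + 1) z = deriv (G k) z * z ^ (1 : ℤ) := by
      intro k
      filter_upwards [self_mem_nhdsWithin] with z hz
      rw [hGs k z, zpow_one]; ring
    obtain ⟨g, hg, hval, heq⟩ :=
      iter_pole G (1 : ℤ) (-(m : ℤ)) g₀ hg₀ (hinit G hG0) hstep n
    refine ⟨g, hg, ?_, ?_⟩
    · refine hval hg₀0 fun i _ => ?_
      simp only [sub_self, mul_zero, add_zero]
      omega
    · filter_upwards [heq, self_mem_nhdsWithin] with z hz hz0
      have hz0 : z ≠ 0 := hz0
      rw [hz, div_eq_mul_inv, ← zpow_natCast z m, ← zpow_neg]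
      congr 1
      push_cast; ring
  · -- H part : c = s
    have hstep : ∀ k, ∀ᶠ z in 𝓝[≠] (0 : ℂ),
        H (k + 1) z = deriv (H k) z * z ^ (s : ℤ) := by
      intro k
      filter_upwards [self_mem_nhdsWithin] with z hz
      rw [hHs k z, zpow_natCast]; ring
    refine ⟨m, fun n hn => ?_⟩
    obtain ⟨g, hg, -, heq⟩ :=
      iter_pole H (s : ℤ) (-(m : ℤ)) g₀ hg₀ (hinit H hH0) hstep n
    set t : ℤ := -(m : ℤ) + (n : ℤ) * ((s : ℤ) - 1) with ht_def
    have ht : 0 ≤ t := by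
      have h1 : (1 : ℤ) ≤ (s : ℤ) - 1 := by
        have : (2 : ℤ) ≤ (s : ℤ) := by exact_mod_cast hs
        linarith
      have hn' : (m : ℤ) ≤ (n : ℤ) := by exact_mod_cast hn
      have : (n : ℤ) ≤ (n : ℤ) * ((s : ℤ) - 1) := le_mul_of_one_le_right (by positivity) h1
      rw [ht_def]; linarith
    refine ⟨fun z => g z * z ^ t.toNat, hg.mul (analyticAt_id.pow t.toNat), ?_⟩
    filter_upwards [heq] with z hz
    rw [hz]
    congr 1
    rw [← zpow_natCast, Int.toNat_of_nonneg ht]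
end

section
/- Let ρ > 0 be finite and let g be holomorphic on the open disk D(0,ρ) ⊆ ℂ such that g does not extend holomorphically to any disk D(0,ρ′) with ρ′ > ρ (i.e. ρ is exactly the radius of convergence of the Taylor series of g at 0). Suppose that at every boundary point d with |d| = ρ, either g extends holomorphically at d or g extends as a singular convergent Puiseux series at d. Then the set of boundary points at which g does not extend holomorphically is finite and nonempty. -/
open Complex Metric Filter Set Topology RealInnerProductSpace
open scoped ENNReal NNReal

/-- `f`, holomorphic on the disk `D(0,ρ)`, extends holomorphically at the boundary
point `d`: there are an open neighbourhood `W` of `d` and a holomorphic function on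
`W` agreeing with `f` on `W ∩ D(0,ρ)`. -/
def ExtendsHolomorphicallyAt (f : ℂ → ℂ) (ρ : ℝ) (d : ℂ) : Prop :=
  ∃ W : Set ℂ, IsOpen W ∧ d ∈ W ∧ ∃ h : ℂ → ℂ,
    DifferentiableOn ℂ h W ∧ ∀ z ∈ W ∩ Metric.ball (0 : ℂ) ρ, h z = f z

/-- `f`, holomorphic on the disk `D(0,ρ)`, extends as a singular convergent Puiseux
series at the boundary point `d`: there are `M ≥ 1`, `k₀ ∈ ℤ`, coefficients
`(c k)_{k ≥ k₀}` with `c k₀ ≠ 0` and `c k ≠ 0` for at least one `k` that is negative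
or not divisible by `M`, and `ε > 0` such that for `|z| < ρ`, `0 < |z − d| < ε` the
series `Σ_k c k · exp((k/M)·Log(1 − z/d))` converges absolutely to `f z`. -/
def ExtendsAsSingularPuiseuxAt (f : ℂ → ℂ) (ρ : ℝ) (d : ℂ) : Prop :=
  ∃ (M : ℕ) (k₀ : ℤ) (c : ℤ → ℂ) (ε : ℝ), 1 ≤ M ∧ 0 < ε ∧
    c k₀ ≠ 0 ∧ (∀ k : ℤ, k < k₀ → c k = 0) ∧
    (∃ k : ℤ, c k ≠ 0 ∧ (k < 0 ∨ ¬ ((M : ℤ) ∣ k))) ∧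
    ∀ z : ℂ, ‖z‖ < ρ → z ≠ d → ‖z - d‖ < ε →
      (Summable fun k : ℤ =>
        ‖c k * Complex.exp ((k : ℂ) / (M : ℂ) * Complex.log (1 - z / d))‖) ∧
      HasSum (fun k : ℤ =>
        c k * Complex.exp ((k : ℂ) / (M : ℂ) * Complex.log (1 - z / d))) (f z)


lemma aux_quad {u ρ s P : ℝ} (hu : 0 < u) (hs0 : 0 ≤ s) (hρs : 0 ≤ ρ - s) (hρu : ρ ≤ u) (hP : P ≤ u * ρ) :
    ((ρ-s)/u)^2*u^2 - 2*((ρ-s)/u)*P + ρ^2 ≤ u^2 - 2*P + ρ^2 + s^2 := by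
  set c : ℝ := (ρ-s)/u with hc_def
  have hcu : c*u = ρ-s := div_mul_cancel₀ _ hu.ne'
  have h1c : 0 ≤ 1 - c := by
    have : c ≤ 1 := by rw [hc_def, div_le_one hu]; linarith
    linarith
  have e1 : c^2*u^2 = (ρ-s)^2 := by rw [show c^2*u^2 = (c*u)^2 by ring, hcu]
  have e2 : (1-c)*P ≤ (1-c)*(u*ρ) := mul_le_mul_of_nonneg_left hP h1c
  have e3 : (1-c)*(u*ρ) = u*ρ - (ρ-s)*ρ := by
    rw [sub_mul, one_mul, show c*(u*ρ) = (c*u)*ρ by ring, hcu]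
  nlinarith [sq_nonneg (u-ρ)]

/-- key geometric lemma -/
lemma aux_meet {ρ r r' : ℝ} {d d' x : ℂ} (hρ : 0 < ρ)
    (hd : ‖d‖ = ρ) (hd' : ‖d'‖ = ρ)
    (hx : x ∈ ball d r) (hx' : x ∈ ball d' r') :
    ∃ y : ℂ, ‖y‖ < ρ ∧ y ∈ ball d r ∧ y ∈ ball d' r' := by
  rcases lt_or_ge ‖x‖ ρ with h | h
  · exact ⟨x, h, hx, hx'⟩
  have hxr : ‖x - d‖ < r := by rwa [mem_ball, dist_eq_norm] at hx
  have hxr' : ‖x - d'‖ < r' := by rwa [mem_ball, dist_eq_norm] at hx'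
  have hn : (0:ℝ) ≤ ‖x - d‖ := norm_nonneg _
  have hn' : (0:ℝ) ≤ ‖x - d'‖ := norm_nonneg _
  set s : ℝ := min ρ (min (r - ‖x - d‖) (r' - ‖x - d'‖)) / 2 with hs_def
  have hs_pos : 0 < s := by
    apply div_pos _ two_pos
    exact lt_min hρ (lt_min (by linarith) (by linarith))
  have hsρ : s ≤ ρ := by
    have := min_le_left ρ (min (r - ‖x - d‖) (r' - ‖x - d'‖)); simp only [hs_def]; linarith
  have hs2 : s ^ 2 < r ^ 2 - ‖x - d‖ ^ 2 := by
    have h1 : s < r - ‖x - d‖ := by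
      have : min ρ (min (r - ‖x - d‖) (r' - ‖x - d'‖)) ≤ r - ‖x - d‖ :=
        (min_le_right _ _).trans (min_le_left _ _)
      simp only [hs_def]; linarith
    nlinarith
  have hs2' : s ^ 2 < r' ^ 2 - ‖x - d'‖ ^ 2 := by
    have h1 : s < r' - ‖x - d'‖ := by
      have : min ρ (min (r - ‖x - d‖) (r' - ‖x - d'‖)) ≤ r' - ‖x - d'‖ :=
        (min_le_right _ _).trans (min_le_right _ _)
      simp only [hs_def]; linarith
    nlinarith
  have hx0 : 0 < ‖x‖ := lt_of_lt_of_le hρ h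
  set y : ℂ := ((ρ - s) / ‖x‖ : ℝ) • x with hy_def
  have hyn : ‖y‖ = ρ - s := by
    rw [hy_def, norm_smul, Real.norm_eq_abs,
      _root_.abs_of_nonneg (div_nonneg (by linarith : (0:ℝ) ≤ ρ - s) hx0.le)]
    exact div_mul_cancel₀ _ hx0.ne'
  have key : ∀ e : ℂ, ‖e‖ = ρ → ‖y - e‖ ^ 2 ≤ ‖x - e‖ ^ 2 + s ^ 2 := by
    intro e he
    have hP : (@inner ℝ ℂ _ x e) ≤ ‖x‖ * ρ := by
      have := real_inner_le_norm x e; rw [he] at this; exact this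
    have e1 : ‖y - e‖ ^ 2 = ((ρ - s)/‖x‖)^2 * ‖x‖^2 - 2 * ((ρ - s)/‖x‖) * (@inner ℝ ℂ _ x e) + ρ ^ 2 := by
      rw [norm_sub_sq_real, hy_def, real_inner_smul_left, norm_smul, Real.norm_eq_abs,
        _root_.abs_of_nonneg (div_nonneg (by linarith : (0:ℝ) ≤ ρ - s) hx0.le), he]
      ring
    have e2 : ‖x - e‖ ^ 2 = ‖x‖^2 - 2 * (@inner ℝ ℂ _ x e) + ρ ^ 2 := by
      rw [norm_sub_sq_real, he]
    rw [e1, e2]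
    have := aux_quad hx0 hs_pos.le (by linarith : (0:ℝ) ≤ ρ - s) h hP
    linarith
  have hrpos : 0 < r := lt_of_le_of_lt hn hxr
  have hrpos' : 0 < r' := lt_of_le_of_lt hn' hxr'
  refine ⟨y, by rw [hyn]; linarith, ?_, ?_⟩
  · rw [mem_ball, dist_eq_norm]
    have h2 : ‖y - d‖ ^ 2 < r ^ 2 := by have := key d hd; linarith
    exact lt_of_pow_lt_pow_left₀ 2 hrpos.le h2
  · rw [mem_ball, dist_eq_norm]
    have h2 : ‖y - d'‖ ^ 2 < r' ^ 2 := by have := key d' hd'; linarith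
    exact lt_of_pow_lt_pow_left₀ 2 hrpos'.le h2

lemma aux_re_lt_one {w : ℂ} (h1 : ‖w‖ = 1) (h2 : w ≠ 1) : w.re < 1 := by
  have hle : w.re ≤ 1 := h1 ▸ Complex.re_le_norm w
  refine lt_of_le_of_ne hle fun he => h2 ?_
  have hsq : w.re^2 + w.im^2 = 1 := by
    have h3 := Complex.sq_norm w
    rw [h1, Complex.normSq_apply] at h3
    nlinarith
  have him : w.im = 0 := by nlinarith
  exact Complex.ext (by rw [he, Complex.one_re]) (by rw [him, Complex.one_im])

lemma aux_abs_one_sub_div {d d' : ℂ} (hd0 : d ≠ 0) :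
    ‖1 - d'/d‖ = ‖d' - d‖ / ‖d‖ := by
  rw [show (1:ℂ) - d'/d = (d - d')/d by field_simp, norm_div, norm_sub_rev]

lemma puiseux_isolated (ρ : ℝ) (hρ : 0 < ρ) (g : ℂ → ℂ) {d : ℂ} (hd : ‖d‖ = ρ)
    (hp : ExtendsAsSingularPuiseuxAt g ρ d) :
    ∃ δ > 0, ∀ d' : ℂ, ‖d'‖ = ρ → d' ≠ d → ‖d' - d‖ < δ →
      ExtendsHolomorphicallyAt g ρ d' := by
  classical
  obtain ⟨M, k₀, c, ε, hM, hε, -, hlow, -, hsum⟩ := hp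
  have hd0 : d ≠ 0 := by
    intro h; rw [h, norm_zero] at hd; linarith
  have hMne : M ≠ 0 := by omega
  have hMR : (0:ℝ) < M := by exact_mod_cast Nat.pos_of_ne_zero hMne
  have hM0 : (M:ℂ) ≠ 0 := by exact_mod_cast Nat.cast_ne_zero.mpr hMne
  set s₀ : ℝ := min (1/2) (ε / (2*ρ)) with hs₀_def
  have hs₀pos : 0 < s₀ := lt_min (by norm_num) (by positivity)
  have hs₀half : s₀ ≤ 1/2 := min_le_left _ _
  have hs₀ε : s₀ ≤ ε/(2*ρ) := min_le_right _ _
  -- Step 1 : summability of |c k| s^k for 0 < s < s₀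
  have hsummable : ∀ s : ℝ, 0 < s → s < s₀ →
      Summable (fun k : ℤ => ‖c k‖ * s ^ k) := by
    intro s hs hss
    have hs1 : s < 1 := by linarith
    have hpow_pos : 0 < s ^ M := pow_pos hs M
    have hpow_le : s ^ M ≤ s := pow_le_of_le_one hs.le hs1.le hMne
    set z : ℂ := d * (1 - (s:ℂ) ^ M) with hz_def
    have hzd : 1 - z / d = (s:ℂ) ^ M := by
      rw [hz_def, mul_div_cancel_left₀ _ hd0]; ring
    have h1 : ‖z‖ < ρ := by
      rw [hz_def, norm_mul, hd]
      have he : (1 - (s:ℂ)^M) = ((1 - s^M : ℝ) : ℂ) := by push_cast; ring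
      rw [he, Complex.norm_real, Real.norm_eq_abs, _root_.abs_of_nonneg (by nlinarith)]
      nlinarith
    have h2 : z ≠ d := by
      intro h
      rw [hz_def] at h
      have h' : (1 - (s:ℂ)^M) = 1 := mul_left_cancel₀ hd0 (by rw [h, mul_one])
      have hzero : ((s:ℂ))^M = 0 := by linear_combination -h'
      have : (s:ℂ) = 0 := pow_eq_zero_iff hMne |>.mp hzero
      exact absurd (by exact_mod_cast this : s = 0) hs.ne'
    have h3 : ‖z - d‖ < ε := by
      have he : z - d = -(d * (s:ℂ)^M) := by rw [hz_def]; ring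
      rw [he, norm_neg, norm_mul, hd, norm_pow, Complex.norm_real, Real.norm_eq_abs,
        _root_.abs_of_nonneg hs.le]
      have : s ^ M < ε/(2*ρ) := lt_of_le_of_lt hpow_le (lt_of_lt_of_le hss hs₀ε)
      calc ρ * s ^ M < ρ * (ε/(2*ρ)) := by
            exact mul_lt_mul_of_pos_left this hρ
        _ = ε/2 := by field_simp
        _ < ε := by linarith
    have hS := (hsum z h1 h2 h3).1
    have key : ∀ k : ℤ, ‖c k * Complex.exp ((k:ℂ)/(M:ℂ)
        * Complex.log (1 - z/d))‖ = ‖c k‖ * s ^ k := by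
      intro k
      rw [norm_mul]
      congr 1
      rw [hzd, show ((s:ℂ))^M = ((s^M : ℝ) : ℂ) by push_cast; ring,
        ← Complex.ofReal_log (by positivity : (0:ℝ) ≤ s^M), Real.log_pow]
      rw [show (k:ℂ)/(M:ℂ) * (((M:ℕ) * Real.log s : ℝ) : ℂ)
          = (k:ℤ) * ((Real.log s : ℝ):ℂ) by push_cast; field_simp]
      rw [Complex.exp_int_mul, norm_zpow, Complex.norm_exp]
      norm_num [Real.exp_log hs]
    exact (summable_congr key).mp hS
  -- Step 2 : the power series and its radius
  set p := FormalMultilinearSeries.ofScalars ℂ (fun n : ℕ => c n) with hp_def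
  set s₂ : ℝ := s₀/2 with hs₂_def
  set s₃ : ℝ := 3*s₀/4 with hs₃_def
  have hs₂pos : 0 < s₂ := by positivity
  have hs₃pos : 0 < s₃ := by positivity
  have hnat : Summable (fun n : ℕ => ‖p n‖ * s₃ ^ n) := by
    have h := (hsummable s₃ hs₃pos (by rw [hs₃_def]; linarith)).comp_injective
      (Nat.cast_injective : Function.Injective (fun n : ℕ => (n:ℤ)))
    refine h.congr fun n => ?_
    simp only [Function.comp_apply, zpow_natCast]
    rw [hp_def, FormalMultilinearSeries.ofScalars_norm]
  have hrad : ENNReal.ofReal s₃ ≤ p.radius := by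
    have : ((s₃.toNNReal : ℝ≥0) : ℝ≥0∞) ≤ p.radius := by
      apply p.le_radius_of_summable
      rwa [Real.coe_toNNReal _ hs₃pos.le]
    exact this
  have hradpos : 0 < p.radius :=
    lt_of_lt_of_le (by rw [ENNReal.ofReal_pos]; exact hs₃pos) hrad
  have hPdiff : DifferentiableOn ℂ p.sum (EMetric.ball 0 p.radius) :=
    (p.hasFPowerSeriesOnBall hradpos).differentiableOn
  -- the domain W and local data
  set q : ℂ → ℂ := fun z => Complex.exp (Complex.log (1 - z/d) / (M:ℂ)) with hq_def
  set W : Set ℂ := {z | 0 < (1 - z/d).re} ∩ {z | ‖1 - z/d‖ < s₂^M} with hW_def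
  have hc1 : Continuous fun z : ℂ => 1 - z/d := by fun_prop
  have hWopen : IsOpen W := by
    apply IsOpen.inter
    · exact isOpen_Ioi.preimage (Complex.continuous_re.comp hc1)
    · exact isOpen_Iio.preimage (continuous_norm.comp hc1)
  have hwne : ∀ z ∈ W, (1 - z/d) ≠ 0 := by
    intro z hz h
    have := hz.1
    rw [mem_setOf_eq, h] at this
    simp at this
  have habs_q : ∀ z ∈ W, ‖q z‖ < s₂ := by
    intro z hz
    have hw_pos : 0 < ‖1 - z/d‖ := norm_pos_iff.mpr (hwne z hz)
    have heq : ‖q z‖ = ‖1 - z/d‖ ^ ((M:ℝ)⁻¹) := by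
      rw [hq_def]
      simp only []
      rw [Complex.norm_exp, show ((M:ℕ):ℂ) = (((M:ℕ):ℝ):ℂ) by push_cast; rfl,
        Complex.div_ofReal_re, Complex.log_re, Real.rpow_def_of_pos hw_pos,
        div_eq_mul_inv]
    rw [heq]
    calc ‖1 - z/d‖ ^ ((M:ℝ)⁻¹) < (s₂^M) ^ ((M:ℝ)⁻¹) :=
          Real.rpow_lt_rpow hw_pos.le hz.2 (by positivity)
      _ = s₂ := by
          rw [← Real.rpow_natCast s₂ M, ← Real.rpow_mul hs₂pos.le,
            mul_inv_cancel₀ (by exact_mod_cast hMR.ne'), Real.rpow_one]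
  have hmemq : ∀ z ∈ W, q z ∈ EMetric.ball (0:ℂ) p.radius := by
    intro z hz
    rw [show q z ∈ EMetric.ball (0:ℂ) p.radius ↔ edist (q z) 0 < p.radius from Iff.rfl, edist_zero_right, ← ofReal_norm]
    refine lt_of_lt_of_le ?_ hrad
    rw [ENNReal.ofReal_lt_ofReal_iff hs₃pos]
    have := habs_q z hz
    rw [hs₂_def] at this; rw [hs₃_def]; linarith
  have hqdiff : ∀ z ∈ W, DifferentiableAt ℂ q z := by
    intro z hz
    have hc : DifferentiableAt ℂ (fun z : ℂ => 1 - z/d) z :=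
      (differentiableAt_const _).sub (differentiableAt_id.div_const d)
    have hlog : DifferentiableAt ℂ (fun z => Complex.log (1 - z/d)) z :=
      hc.clog (Or.inl hz.1)
    exact Complex.differentiable_exp.differentiableAt.comp z (hlog.div_const _)
  set N : ℕ := (-k₀).toNat with hN_def
  set hF : ℂ → ℂ := fun z => p.sum (q z)
    + ∑ n ∈ Finset.range N, c (-((n:ℤ)+1)) * (q z) ^ (-((n:ℤ)+1)) with hF_def
  have hFdiff : DifferentiableOn ℂ hF W := by
    intro z hz
    apply DifferentiableAt.differentiableWithinAt
    have hq := hqdiff z hz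
    have h1 : DifferentiableAt ℂ (fun z => p.sum (q z)) z :=
      (hPdiff.differentiableAt (EMetric.isOpen_ball.mem_nhds (hmemq z hz))).comp z hq
    have h2 : DifferentiableAt ℂ
        (fun z => ∑ n ∈ Finset.range N, c (-((n:ℤ)+1)) * (q z) ^ (-((n:ℤ)+1))) z := by
      apply DifferentiableAt.fun_sum
      intro n _
      exact (hq.zpow (Or.inl (Complex.exp_ne_zero _))).const_mul _
    exact h1.add h2
  have hagree : ∀ z ∈ W ∩ Metric.ball (0:ℂ) ρ, hF z = g z := by
    rintro z ⟨hzW, hzball⟩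
    have hzρ : ‖z‖ < ρ := by
      rwa [mem_ball, Complex.dist_eq, sub_zero] at hzball
    have hzd : z ≠ d := by
      intro h
      apply hwne z hzW
      rw [h, div_self hd0]; ring
    have hzε : ‖z - d‖ < ε := by
      have he : ‖1 - z/d‖ = ‖z - d‖ / ρ := by
        rw [aux_abs_one_sub_div hd0, hd]
      have h2 := hzW.2
      rw [mem_setOf_eq, he] at h2
      have hsM : s₂^M ≤ s₂ := pow_le_of_le_one hs₂pos.le (by rw [hs₂_def]; linarith) hMne
      have : ‖z - d‖ < ρ * s₂^M := by
        rw [div_lt_iff₀ hρ] at h2; linarith [h2]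
      calc ‖z - d‖ < ρ * s₂^M := this
        _ ≤ ρ * s₂ := by nlinarith
        _ ≤ ρ * (ε/(2*ρ)) := by
            have : s₂ ≤ ε/(2*ρ) := by rw [hs₂_def]; linarith
            nlinarith
        _ = ε/2 := by field_simp
        _ < ε := by linarith
    obtain ⟨-, hHasSum⟩ := hsum z hzρ hzd hzε
    have hfk : ∀ k : ℤ, c k * Complex.exp ((k:ℂ)/(M:ℂ) * Complex.log (1 - z/d))
        = c k * q z ^ k := by
      intro k
      congr 1
      rw [show (k:ℂ)/(M:ℂ) * Complex.log (1 - z/d)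
          = ((k:ℤ):ℂ) * (Complex.log (1 - z/d) / (M:ℂ)) by push_cast; ring,
        Complex.exp_int_mul]
    have hHasSum' : HasSum (fun k : ℤ => c k * q z ^ k) (g z) :=
      (funext hfk : _) ▸ hHasSum
    have hnatsum : HasSum (fun n : ℕ => c (n:ℤ) * q z ^ (n:ℕ)) (p.sum (q z)) := by
      have h := p.hasSum (hmemq z hzW)
      have he : (fun n : ℕ => p n fun _ => q z) = fun n : ℕ => c (n:ℤ) * q z ^ (n:ℕ) := by
        funext n
        rw [hp_def, FormalMultilinearSeries.ofScalars_apply_eq, smul_eq_mul]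
      rwa [he] at h
    have hnegsum : HasSum (fun n : ℕ => c (-((n:ℤ)+1)) * q z ^ (-((n:ℤ)+1)))
        (∑ n ∈ Finset.range N, c (-((n:ℤ)+1)) * q z ^ (-((n:ℤ)+1))) := by
      apply hasSum_sum_of_ne_finset_zero
      intro n hn
      have hnN : N ≤ n := by simpa using hn
      have hk : -((n:ℤ)+1) < k₀ := by
        have h1 : (-k₀) ≤ ((-k₀).toNat : ℤ) := Int.self_le_toNat _
        have h2 : ((N:ℕ) : ℤ) ≤ (n:ℤ) := by exact_mod_cast hnN
        rw [hN_def] at h2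
        omega
      rw [hlow _ hk, zero_mul]
    have hcomb : HasSum (fun k : ℤ => c k * q z ^ k)
        (p.sum (q z) + ∑ n ∈ Finset.range N, c (-((n:ℤ)+1)) * q z ^ (-((n:ℤ)+1))) := by
      apply HasSum.of_nat_of_neg_add_one
      · have he : (fun n : ℕ => c (n:ℤ) * q z ^ ((n:ℤ))) = fun n : ℕ => c (n:ℤ) * q z ^ (n:ℕ) := by
          funext n; rw [zpow_natCast]
        show HasSum (fun n : ℕ => c (n:ℤ) * q z ^ ((n:ℤ))) _
        rw [he]; exact hnatsum
      · exact hnegsum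
    rw [hF_def]
    exact (hHasSum'.unique hcomb).symm
  refine ⟨ρ * s₂^M, by positivity, fun d' hd' hne hcl => ?_⟩
  refine ⟨W, hWopen, ⟨?_, ?_⟩, hF, hFdiff, hagree⟩
  · have hww : ‖d'/d‖ = 1 := by rw [norm_div, hd, hd', div_self hρ.ne']
    have hne1 : d'/d ≠ 1 := fun h => hne ((div_eq_one_iff_eq hd0).mp h)
    have hlt := aux_re_lt_one hww hne1
    show 0 < (1 - d'/d).re
    rw [Complex.sub_re, Complex.one_re]
    linarith
  · show ‖1 - d'/d‖ < s₂^M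
    rw [aux_abs_one_sub_div hd0, hd, div_lt_iff₀ hρ]
    calc ‖d' - d‖ < ρ * s₂^M := hcl
      _ = s₂^M * ρ := by ring

lemma glue_extension (ρ : ℝ) (hρ : 0 < ρ) (g : ℂ → ℂ)
    (hg : DifferentiableOn ℂ g (Metric.ball (0 : ℂ) ρ))
    (hall : ∀ d : ℂ, ‖d‖ = ρ → ExtendsHolomorphicallyAt g ρ d) :
    ∃ ρ' > ρ, ∃ h : ℂ → ℂ, DifferentiableOn ℂ h (Metric.ball (0 : ℂ) ρ') ∧
      ∀ z ∈ Metric.ball (0 : ℂ) ρ, h z = g z := by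
  classical
  have H : ∀ d : ℂ, ∃ r : ℝ, ∃ hf : ℂ → ℂ, ‖d‖ = ρ →
      0 < r ∧ DifferentiableOn ℂ hf (ball d r) ∧
      ∀ z ∈ ball d r ∩ ball (0:ℂ) ρ, hf z = g z := by
    intro d
    by_cases hd : ‖d‖ = ρ
    · obtain ⟨W, hWopen, hdW, hf, hdiff, heq⟩ := hall d hd
      obtain ⟨r, hr, hball⟩ := Metric.isOpen_iff.1 hWopen d hdW
      exact ⟨r, hf, fun _ => ⟨hr, hdiff.mono hball,
        fun z hz => heq z ⟨hball hz.1, hz.2⟩⟩⟩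
    · exact ⟨1, g, fun h => absurd h hd⟩
  choose r hf hspec using H
  have hsphere : ∀ x ∈ sphere (0:ℂ) ρ, ‖x‖ = ρ := by
    intro x hx
    rwa [mem_sphere_iff_norm, sub_zero] at hx
  obtain ⟨t, htsub, htcov⟩ := (isCompact_sphere (0:ℂ) ρ).elim_nhds_subcover
    (fun d => ball d (r d))
    (fun x hx => ball_mem_nhds x (hspec x (hsphere x hx)).1)
  have htρ : ∀ d ∈ t, ‖d‖ = ρ := fun d hd => hsphere d (htsub d hd)
  set U : Set ℂ := ball (0:ℂ) ρ ∪ ⋃ d ∈ t, ball d (r d) with hU_def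
  have hUopen : IsOpen U :=
    isOpen_ball.union (isOpen_biUnion fun _ _ => isOpen_ball)
  have hsub : closedBall (0:ℂ) ρ ⊆ U := by
    intro z hz
    rw [mem_closedBall, Complex.dist_eq, sub_zero] at hz
    rcases lt_or_eq_of_le hz with h | h
    · exact Or.inl (by rwa [mem_ball, Complex.dist_eq, sub_zero])
    · refine Or.inr (htcov ?_)
      rwa [mem_sphere_iff_norm, sub_zero]
  obtain ⟨δ, hδpos, hδ⟩ :=
    (isCompact_closedBall (0:ℂ) ρ).exists_thickening_subset_open hUopen hsub
  have hρ'sub : ball (0:ℂ) (ρ + δ) ⊆ U := by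
    refine subset_trans ?_ hδ
    intro z hz
    rw [mem_ball, Complex.dist_eq, sub_zero] at hz
    rw [Metric.mem_thickening_iff]
    rcases le_or_gt (‖z‖) ρ with h | h
    · exact ⟨z, by rwa [mem_closedBall, Complex.dist_eq, sub_zero], by simpa using hδpos⟩
    · have hz0 : (0:ℝ) < ‖z‖ := lt_trans hρ h
      refine ⟨((ρ / ‖z‖ : ℝ)) • z, ?_, ?_⟩
      · rw [mem_closedBall, Complex.dist_eq, sub_zero]
        rw [show ((ρ / ‖z‖ : ℝ)) • z = ((ρ / ‖z‖ : ℝ) : ℂ) * z from rfl]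
        rw [norm_mul, Complex.norm_real, Real.norm_eq_abs, _root_.abs_of_nonneg (by positivity)]
        rw [div_mul_cancel₀ _ hz0.ne']
      · have : z - ((ρ / ‖z‖ : ℝ)) • z = ((1 - ρ / ‖z‖ : ℝ)) • z := by
          push_cast [Complex.real_smul]
          ring
        rw [dist_eq_norm, this, norm_smul, Real.norm_eq_abs,
          _root_.abs_of_nonneg (by rw [sub_nonneg, div_le_one hz0]; exact h.le)]
        rw [sub_mul, one_mul, div_mul_cancel₀ _ hz0.ne']
        linarith
  -- pairwise agreement
  have agree : ∀ d ∈ t, ∀ d' ∈ t, ∀ z ∈ ball d (r d) ∩ ball d' (r d'),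
      hf d z = hf d' z := by
    intro d hdt d' hd't x hx
    have hdn : ‖d‖ = ρ := by exact htρ d hdt
    have hd'n : ‖d'‖ = ρ := by exact htρ d' hd't
    obtain ⟨y, hyρ, hy1, hy2⟩ := aux_meet hρ hdn hd'n hx.1 hx.2
    set V : Set ℂ := ball d (r d) ∩ ball d' (r d') with hV_def
    have hVopen : IsOpen V := isOpen_ball.inter isOpen_ball
    have hVpre : IsPreconnected V :=
      ((convex_ball d (r d)).inter (convex_ball d' (r d'))).isPreconnected
    have h1 : AnalyticOnNhd ℂ (hf d) V :=
      (((hspec d (htρ d hdt)).2.1).mono inter_subset_left).analyticOnNhd hVopen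
    have h2 : AnalyticOnNhd ℂ (hf d') V :=
      (((hspec d' (htρ d' hd't)).2.1).mono inter_subset_right).analyticOnNhd hVopen
    have hyV : y ∈ V := ⟨hy1, hy2⟩
    have hyb : y ∈ ball (0:ℂ) ρ := by
      rwa [mem_ball, dist_eq_norm, sub_zero]
    have hev : hf d =ᶠ[nhds y] hf d' := by
      have hopen : IsOpen (V ∩ ball (0:ℂ) ρ) := hVopen.inter isOpen_ball
      filter_upwards [hopen.mem_nhds ⟨hyV, hyb⟩] with w hw
      rw [(hspec d (htρ d hdt)).2.2 w ⟨hw.1.1, hw.2⟩,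
        (hspec d' (htρ d' hd't)).2.2 w ⟨hw.1.2, hw.2⟩]
    exact h1.eqOn_of_preconnected_of_eventuallyEq h2 hVpre hyV hev hx
  -- the glued function
  set F : ℂ → ℂ := fun z =>
    if ‖z‖ < ρ then g z
    else if hz : ∃ d, d ∈ t ∧ z ∈ ball d (r d) then hf hz.choose z else 0 with hF_def
  have hF1 : ∀ w : ℂ, ‖w‖ < ρ → F w = g w := by
    intro w hw; rw [hF_def]; simp only [if_pos hw]
  have hF2 : ∀ d ∈ t, ∀ w ∈ ball d (r d), F w = hf d w := by
    intro d hdt w hw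
    by_cases h1 : ‖w‖ < ρ
    · rw [hF1 w h1, (hspec d (htρ d hdt)).2.2 w ⟨hw, by
        rwa [mem_ball, Complex.dist_eq, sub_zero]⟩]
    · have hex : ∃ d', d' ∈ t ∧ w ∈ ball d' (r d') := ⟨d, hdt, hw⟩
      rw [hF_def]
      simp only [if_neg h1, dif_pos hex]
      exact agree _ hex.choose_spec.1 d hdt w ⟨hex.choose_spec.2, hw⟩
  refine ⟨ρ + δ, by linarith, F, ?_, fun z hz => hF1 z (by
    rwa [mem_ball, Complex.dist_eq, sub_zero] at hz)⟩
  intro z hz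
  apply DifferentiableAt.differentiableWithinAt
  have hzU : z ∈ U := hρ'sub hz
  by_cases h1 : ‖z‖ < ρ
  · have hev : F =ᶠ[nhds z] g := by
      filter_upwards [isOpen_ball.mem_nhds (show z ∈ ball (0:ℂ) ρ by
        rwa [mem_ball, Complex.dist_eq, sub_zero])] with w hw
      exact hF1 w (by rwa [mem_ball, Complex.dist_eq, sub_zero] at hw)
    have hgz : DifferentiableAt ℂ g z :=
      hg.differentiableAt (isOpen_ball.mem_nhds (by
        rwa [mem_ball, Complex.dist_eq, sub_zero]))
    exact hgz.congr_of_eventuallyEq hev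
  · have hzcup : z ∈ ⋃ d ∈ t, ball d (r d) := by
      rcases hzU with h | h
      · exact absurd (by rwa [mem_ball, Complex.dist_eq, sub_zero] at h) h1
      · exact h
    rw [mem_iUnion₂] at hzcup
    obtain ⟨d₀, hd₀t, hzd₀⟩ := hzcup
    have hev : F =ᶠ[nhds z] hf d₀ := by
      filter_upwards [isOpen_ball.mem_nhds hzd₀] with w hw
      exact hF2 d₀ hd₀t w hw
    have hfz : DifferentiableAt ℂ (hf d₀) z :=
      (hspec d₀ (htρ d₀ hd₀t)).2.1.differentiableAt (isOpen_ball.mem_nhds hzd₀)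
    exact hfz.congr_of_eventuallyEq hev

/-- **Lemma 3.6.** If the radius of convergence of `g` at `0` is exactly `ρ`, and at
every boundary point `g` either extends holomorphically or extends as a singular
convergent Puiseux series, then the set of boundary points at which `g` does not
extend holomorphically is finite and nonempty. -/
theorem voronoi_index_finite_positive
    (ρ : ℝ) (hρ : 0 < ρ) (g : ℂ → ℂ)
    (hg : DifferentiableOn ℂ g (Metric.ball (0 : ℂ) ρ))
    (hmax : ∀ ρ' > ρ, ¬ ∃ h : ℂ → ℂ, DifferentiableOn ℂ h (Metric.ball (0 : ℂ) ρ') ∧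
        ∀ z ∈ Metric.ball (0 : ℂ) ρ, h z = g z)
    (hbd : ∀ d : ℂ, ‖d‖ = ρ →
        ExtendsHolomorphicallyAt g ρ d ∨ ExtendsAsSingularPuiseuxAt g ρ d) :
    {d : ℂ | ‖d‖ = ρ ∧ ¬ ExtendsHolomorphicallyAt g ρ d}.Finite ∧
    {d : ℂ | ‖d‖ = ρ ∧ ¬ ExtendsHolomorphicallyAt g ρ d}.Nonempty := by
  classical
  set S := {d : ℂ | ‖d‖ = ρ ∧ ¬ ExtendsHolomorphicallyAt g ρ d} with hS_def
  have hSmem : ∀ y, y ∈ S ↔ ‖y‖ = ρ ∧ ¬ ExtendsHolomorphicallyAt g ρ y := by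
    intro y; rw [hS_def]; exact Iff.rfl
  have key : ∀ x ∈ sphere (0:ℂ) ρ, ∃ V : Set ℂ, V ∈ nhds x ∧ ∀ y ∈ S ∩ V, y = x := by
    intro x hx
    have hxρ : ‖x‖ = ρ := by
      rwa [mem_sphere_iff_norm, sub_zero] at hx
    rcases hbd x hxρ with he | hpui
    · obtain ⟨W, hWopen, hxW, hf, hdiff, heq⟩ := he
      refine ⟨W, hWopen.mem_nhds hxW, fun y hy => ?_⟩
      exact (((hSmem y).1 hy.1).2 ⟨W, hWopen, hy.2, hf, hdiff, heq⟩).elim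
    · obtain ⟨δ, hδpos, hδ⟩ := puiseux_isolated ρ hρ g hxρ hpui
      refine ⟨ball x δ, ball_mem_nhds x hδpos, ?_⟩
      rintro y ⟨hyS, hyV⟩
      by_contra hne
      exact ((hSmem y).1 hyS).2 (hδ y ((hSmem y).1 hyS).1 hne
        (by rwa [mem_ball, Complex.dist_eq] at hyV))
  have hfin : S.Finite := by
    choose V hV hVspec using key
    obtain ⟨t, htcov⟩ := (isCompact_sphere (0:ℂ) ρ).elim_nhds_subcover' V hV
    have himg : ((fun x : sphere (0:ℂ) ρ => (x : ℂ)) '' (t : Set (sphere (0:ℂ) ρ))).Finite :=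
      Set.Finite.image _ t.finite_toSet
    apply Set.Finite.subset himg
    intro y hy
    have hyρ : ‖y‖ = ρ := ((hSmem y).1 hy).1
    have hysphere : y ∈ sphere (0:ℂ) ρ := by
      rwa [mem_sphere_iff_norm, sub_zero]
    have := htcov hysphere
    rw [mem_iUnion₂] at this
    obtain ⟨x, hxt, hyx⟩ := this
    exact ⟨x, hxt, (hVspec _ _ y ⟨hy, hyx⟩).symm⟩
  have hne : S.Nonempty := by
    by_contra hempty
    have hall : ∀ d : ℂ, ‖d‖ = ρ → ExtendsHolomorphicallyAt g ρ d := by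
      intro d hd
      by_contra hnot
      exact hempty ⟨d, (hSmem d).2 ⟨hd, hnot⟩⟩
    obtain ⟨ρ', hρ', h, hdiff, heq⟩ := glue_extension ρ hρ g hg hall
    exact hmax ρ' hρ' ⟨h, hdiff, heq⟩
  exact ⟨hfin, hne⟩
end

section
/- Let k ≥ 2, ρ > 0, let c₁, …, c_k ∈ ℂ with |c_i| = ρ, let A = ⋃_{i=1}^k [0, c_i] be the union of the k radial segments, and let F ⊂ {x : |x| = ρ} be a finite set with d := dist(A, F) > 0. For ε > 0 let A_ε = { x ∈ D(0,ρ) : dist(x, A) < ε }. Then there exist constants C_A > 0 (depending only on A) and h > 0 such that for every sufficiently small ε > 0 there exist r > 0 and finitely many points x₁, …, x_s ∈ A_ε ∖ A satisfying: (1) A_ε ⊆ ⋃_{i=1}^s D(x_i, r); (2) the Lebesgue measure of ⋃_{i=1}^s D(x_i, r) is smaller than C_A·ε; (3) the union ⋃_{i=1}^s D(x_i, 2er + h) lies at distance at least d/2 from F. -/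
open Complex Metric Filter Set Topology MeasureTheory

lemma vol_segment_zero (c : ℂ) : MeasureTheory.volume (segment ℝ (0:ℂ) c) = 0 := by
  rcases eq_or_ne c 0 with rfl | hc
  · simp [segment_same]
  · have hsub : segment ℝ (0:ℂ) c ⊆ (Submodule.span ℝ {c} : Submodule ℝ ℂ) := by
      intro z hz
      rw [segment_eq_image] at hz
      obtain ⟨θ, _, hθ⟩ := hz
      simp only [smul_zero, zero_add] at hθ
      exact hθ ▸ Submodule.smul_mem _ θ (Submodule.mem_span_singleton_self c)
    have hne : (Submodule.span ℝ {c} : Submodule ℝ ℂ) ≠ ⊤ := by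
      intro htop
      have hmem : Complex.I * c ∈ Submodule.span ℝ {c} := htop ▸ Submodule.mem_top
      obtain ⟨t, ht⟩ := Submodule.mem_span_singleton.1 hmem
      have h1 : (t : ℂ) * c = Complex.I * c := by
        simpa [Complex.real_smul] using ht
      have h2 := mul_right_cancel₀ hc h1
      have h3 := congrArg Complex.im h2
      simp at h3
    exact measure_mono_null hsub (Measure.addHaar_submodule _ _ hne)

set_option maxHeartbeats 1000000 in
/-- **Covering lemma (Lemma 5.7).** -/
theorem voronoi_disk_covers
    (k : ℕ) (hk : 2 ≤ k) (ρ : ℝ) (hρ : 0 < ρ)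
    (c : Fin k → ℂ) (hc : ∀ i, ‖c i‖ = ρ)
    (A : Set ℂ) (hA : A = ⋃ i, segment ℝ (0 : ℂ) (c i))
    (F : Set ℂ) (hF : F.Finite) (hFne : F.Nonempty)
    (hFsph : F ⊆ Metric.sphere (0 : ℂ) ρ)
    (dval : ℝ) (hdval : IsGLB {t : ℝ | ∃ a ∈ A, ∃ p ∈ F, t = dist a p} dval)
    (hdpos : 0 < dval) :
    ∃ C > 0, ∃ h > 0, ∃ ε₀ > 0, ∀ ε : ℝ, 0 < ε → ε ≤ ε₀ →
      ∃ r > 0, ∃ (s : ℕ) (x : Fin s → ℂ),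
        (∀ i : Fin s, x i ∈ {y ∈ Metric.ball (0 : ℂ) ρ | Metric.infDist y A < ε} \ A) ∧
        {y ∈ Metric.ball (0 : ℂ) ρ | Metric.infDist y A < ε} ⊆ ⋃ i, Metric.ball (x i) r ∧
        volume (⋃ i, Metric.ball (x i) r) < ENNReal.ofReal (C * ε) ∧
        ∀ y ∈ ⋃ i, Metric.ball (x i) (2 * Real.exp 1 * r + h), ∀ p ∈ F,
          dval / 2 ≤ dist y p := by
  have he : (0:ℝ) < Real.exp 1 := Real.exp_pos 1
  have hkpos : 0 < k := by omega
  have hKpos : (0:ℝ) < (k:ℝ) := by positivity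
  -- A is nonempty and has measure zero
  have hc0 : ∀ i, c i ≠ 0 := by
    intro i h0
    have := hc i
    rw [h0] at this
    simp at this
    linarith
  have hAne : A.Nonempty := by
    refine ⟨0, ?_⟩
    rw [hA]
    exact Set.mem_iUnion.2 ⟨⟨0, hkpos⟩, left_mem_segment ℝ 0 _⟩
  have hAvol : volume A = 0 := by
    rw [hA]
    exact measure_iUnion_null fun i => vol_segment_zero (c i)
  refine ⟨200 * k * ρ, by positivity, dval / 4, by linarith,
    min ρ (dval / (4 * (8 * Real.exp 1 + 1))), lt_min hρ (by positivity), ?_⟩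
  intro ε hε hεle
  have hερ : ε ≤ ρ := hεle.trans (min_le_left _ _)
  have hεd : ε ≤ dval / (4 * (8 * Real.exp 1 + 1)) := hεle.trans (min_le_right _ _)
  have hεd' : (8 * Real.exp 1 + 1) * ε ≤ dval / 4 := by
    rw [le_div_iff₀ (by positivity)] at hεd
    linarith
  set N : ℕ := ⌈ρ / ε⌉₊ with hN
  set m : ℕ → ℝ := fun j => min (j * ε) (ρ - ε) with hm
  have hm0 : ∀ j, 0 ≤ m j := fun j => le_min (by positivity) (by linarith)
  have hm1 : ∀ j, m j ≤ ρ - ε := fun j => min_le_right _ _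
  set g : Fin k × Fin (N + 1) → ℂ := fun p => (m p.2 / ρ) • c p.1 with hg
  have hgA : ∀ p, g p ∈ A := by
    intro p
    rw [hA]
    refine Set.mem_iUnion.2 ⟨p.1, ?_⟩
    rw [segment_eq_image]
    refine ⟨m p.2 / ρ, ⟨div_nonneg (hm0 _) hρ.le, ?_⟩, by simp [hg]⟩
    rw [div_le_one hρ]
    linarith [hm1 p.2]
  have hgnorm : ∀ p, ‖g p‖ = m p.2 := by
    intro p
    have hcn : ‖c p.1‖ = ρ := by rw [hc p.1]
    show ‖(m p.2 / ρ) • c p.1‖ = m p.2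
    rw [norm_smul, Real.norm_eq_abs, _root_.abs_of_nonneg (div_nonneg (hm0 _) hρ.le), hcn]
    field_simp
  -- choose the generic perturbation u
  have hB : volume (⋃ p : Fin k × Fin (N + 1), (fun v => g p + v) ⁻¹' A) = 0 :=
    measure_iUnion_null fun p => by rw [measure_preimage_add]; exact hAvol
  have : ¬ (Metric.ball (0:ℂ) (ε/2) ⊆ ⋃ p : Fin k × Fin (N + 1), (fun v => g p + v) ⁻¹' A) := by
    intro hsub
    have h1 : volume (Metric.ball (0:ℂ) (ε/2)) = 0 :=
      le_antisymm (hB ▸ measure_mono hsub) (zero_le)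
    exact absurd h1 (measure_ball_pos volume 0 (by positivity)).ne'
  obtain ⟨u, hu_ball, huB⟩ := Set.not_subset.1 this
  have hu : ‖u‖ < ε / 2 := by rwa [mem_ball_zero_iff] at hu_ball
  have huA : ∀ p, g p + u ∉ A := by
    intro p hp
    exact huB (Set.mem_iUnion.2 ⟨p, hp⟩)
  set eqv := finProdFinEquiv (m := k) (n := N + 1) with heqv
  refine ⟨4 * ε, by positivity, k * (N + 1), fun i => g (eqv.symm i) + u, ?_, ?_, ?_, ?_⟩
  · -- membership
    intro i
    constructor
    · constructor
      · rw [mem_ball_zero_iff]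
        calc ‖g (eqv.symm i) + u‖ ≤ ‖g (eqv.symm i)‖ + ‖u‖ := norm_add_le _ _
          _ < (ρ - ε) + ε / 2 := by
              have := hgnorm (eqv.symm i)
              have := hm1 (eqv.symm i).2
              linarith
          _ < ρ := by linarith
      · calc Metric.infDist (g (eqv.symm i) + u) A ≤ dist (g (eqv.symm i) + u) (g (eqv.symm i)) :=
              Metric.infDist_le_dist_of_mem (hgA _)
          _ = ‖u‖ := by rw [dist_eq_norm]; ring_nf
          _ < ε := by linarith
    · exact huA _
  · -- covering
    intro y hy
    obtain ⟨hy1, hy2⟩ := hy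
    obtain ⟨a, haA, hya⟩ := (Metric.infDist_lt_iff hAne).1 hy2
    rw [hA] at haA
    obtain ⟨i0, hi0⟩ := Set.mem_iUnion.1 haA
    rw [segment_eq_image] at hi0
    obtain ⟨θ, ⟨hθ0, hθ1⟩, hθa⟩ := hi0
    simp only [smul_zero, zero_add] at hθa
    set t : ℝ := θ * ρ with ht
    have ht0 : 0 ≤ t := by positivity
    have htρ : t ≤ ρ := by nlinarith
    set t' : ℝ := min t (ρ - ε) with ht'
    have ht'0 : 0 ≤ t' := le_min ht0 (by linarith)
    set j : ℕ := ⌊t' / ε⌋₊ with hj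
    have hjN : j ≤ N := by
      have ht'ρ : t' ≤ ρ := (min_le_left _ _).trans htρ
      calc j ≤ ⌊ρ / ε⌋₊ := Nat.floor_le_floor ((div_le_div_iff_of_pos_right hε).2 ht'ρ)
        _ ≤ N := Nat.floor_le_ceil _
    have hjε : (j:ℝ) * ε ≤ t' := by
      have := Nat.floor_le (div_nonneg ht'0 hε.le)
      calc (j:ℝ) * ε ≤ t' / ε * ε := by
            apply mul_le_mul_of_nonneg_right this hε.le
        _ = t' := by field_simp
    have hjε' : t' < ((j:ℝ) + 1) * ε := by
      have := Nat.lt_floor_add_one (t' / ε)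
      calc t' = t' / ε * ε := by field_simp
        _ < ((j:ℝ) + 1) * ε := by
            apply mul_lt_mul_of_pos_right this hε
    have hmj : m j = (j:ℝ) * ε := by
      rw [hm]
      exact min_eq_left (hjε.trans ((min_le_right _ _)))
    have htm : |t - m j| < 2 * ε := by
      rw [hmj, abs_lt]
      have h1 : t - t' ≤ ε := by
        rcases le_or_gt t (ρ - ε) with h | h
        · rw [ht', min_eq_left h]; linarith
        · rw [ht', min_eq_right h.le]; linarith
      have h2 : t' ≤ t := min_le_left _ _
      constructor <;> nlinarith
    set p : Fin k × Fin (N + 1) := (i0, ⟨j, by omega⟩) with hp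
    refine Set.mem_iUnion.2 ⟨eqv p, ?_⟩
    rw [mem_ball]
    have hxp : g (eqv.symm (eqv p)) + u = g p + u := by rw [Equiv.symm_apply_apply]
    show dist y (g (eqv.symm (eqv p)) + u) < 4 * ε
    rw [hxp]
    have hag : dist a (g p) = |t - m j| := by
      rw [dist_eq_norm, ← hθa, hg]
      have : θ • c i0 - (m p.2 / ρ) • c i0 = (θ - m p.2 / ρ) • c i0 := by
        rw [sub_smul]
      rw [this, norm_smul, Real.norm_eq_abs]
      rw [show ‖c i0‖ = ρ by rw [hc i0]]
      have habs : |θ - m p.2 / ρ| * ρ = |(θ - m p.2 / ρ) * ρ| := by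
        rw [abs_mul, _root_.abs_of_nonneg hρ.le]
      rw [habs]
      congr 1
      have hp2 : ((p.2 : Fin (N+1)) : ℕ) = j := rfl
      rw [hp2, ht]
      field_simp
    calc dist y (g p + u) ≤ dist y a + dist a (g p + u) := dist_triangle _ _ _
      _ ≤ dist y a + (dist a (g p) + dist (g p) (g p + u)) := by
          linarith [dist_triangle a (g p) (g p + u)]
      _ = dist y a + dist a (g p) + ‖u‖ := by
          have huu : dist (g p) (g p + u) = ‖u‖ := by simp [dist_eq_norm]
          rw [huu]; ring
      _ < ε + 2 * ε + ε / 2 := by rw [hag]; linarith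
      _ < 4 * ε := by linarith
  · -- measure
    have hsum : volume (⋃ i : Fin (k * (N+1)), Metric.ball (g (eqv.symm i) + u) (4 * ε)) ≤
        (k * (N+1) : ℕ) * ENNReal.ofReal ((4*ε)^2 * Real.pi) := by
      calc volume (⋃ i : Fin (k * (N+1)), Metric.ball (g (eqv.symm i) + u) (4 * ε))
          ≤ ∑ i : Fin (k * (N+1)), volume (Metric.ball (g (eqv.symm i) + u) (4 * ε)) :=
            measure_iUnion_fintype_le _ _
        _ = ∑ _i : Fin (k * (N+1)), ENNReal.ofReal ((4*ε)^2 * Real.pi) := by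
            refine Finset.sum_congr rfl fun i _ => ?_
            rw [Complex.volume_ball,
              ENNReal.ofReal_mul (by positivity : (0:ℝ) ≤ (4*ε)^2),
              ENNReal.ofReal_pow (by positivity : (0:ℝ) ≤ 4*ε),
              ← NNReal.coe_real_pi, ENNReal.ofReal_coe_nnreal]
        _ = (k * (N+1) : ℕ) * ENNReal.ofReal ((4*ε)^2 * Real.pi) := by
            rw [Finset.sum_const, Finset.card_univ, Fintype.card_fin, nsmul_eq_mul]
    have hreal : (k * (N+1) : ℕ) * ((4*ε)^2 * Real.pi) < 200 * k * ρ * ε := by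
      have hNle : (N:ℝ) * ε ≤ ρ + ε := by
        have h1 : (N:ℝ) < ρ / ε + 1 := Nat.ceil_lt_add_one (by positivity)
        have h2 : (N:ℝ) * ε < (ρ / ε + 1) * ε := by
          apply mul_lt_mul_of_pos_right h1 hε
        have h3 : (ρ / ε + 1) * ε = ρ + ε := by field_simp
        linarith
      have step1 : ((N:ℝ) + 1) * ε ≤ 3 * ρ := by nlinarith
      push_cast
      nlinarith [Real.pi_le_four, Real.pi_pos, mul_pos (mul_pos hKpos hρ) hε,
        mul_nonneg (mul_nonneg hKpos.le hε.le) hε.le, sq_nonneg ε,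
        mul_le_mul_of_nonneg_left step1 (by positivity : (0:ℝ) ≤ 16 * Real.pi * (k:ℝ) * ε)]
    calc volume (⋃ i : Fin (k * (N+1)), Metric.ball (g (eqv.symm i) + u) (4 * ε))
        ≤ (k * (N+1) : ℕ) * ENNReal.ofReal ((4*ε)^2 * Real.pi) := hsum
      _ = ENNReal.ofReal ((k * (N+1) : ℕ) * ((4*ε)^2 * Real.pi)) := by
          rw [ENNReal.ofReal_mul (show (0:ℝ) ≤ ((k*(N+1) : ℕ) : ℝ) by positivity),
            ENNReal.ofReal_natCast]
      _ < ENNReal.ofReal (200 * k * ρ * ε) := by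
          rw [ENNReal.ofReal_lt_ofReal_iff (by positivity)]
          exact hreal
  · -- distance from F
    intro y hy p hpF
    obtain ⟨i, hyi⟩ := Set.mem_iUnion.1 hy
    rw [mem_ball] at hyi
    have hgF : dval ≤ dist (g (eqv.symm i)) p := hdval.1 ⟨g (eqv.symm i), hgA _, p, hpF, rfl⟩
    have htri : dist (g (eqv.symm i)) p ≤ dist (g (eqv.symm i)) (g (eqv.symm i) + u) +
        dist (g (eqv.symm i) + u) y + dist y p := by
      linarith [dist_triangle (g (eqv.symm i)) (g (eqv.symm i) + u) p,
        dist_triangle (g (eqv.symm i) + u) y p]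
    have h1 : dist (g (eqv.symm i)) (g (eqv.symm i) + u) = ‖u‖ := by
      rw [dist_eq_norm]; ring_nf; rw [norm_neg]
    have h2 : dist (g (eqv.symm i) + u) y < 2 * Real.exp 1 * (4 * ε) + dval / 4 := by
      rw [dist_comm]; exact hyi
    rw [h1] at htri
    nlinarith [he, hε]
end

section
/- Let ℓ ≥ 1 be an integer, let P, Q be polynomials over ℂ, let U ⊆ ℂ be open, and let w : U → ℂ be analytic with P(z) ≠ 0, Q(z) ≠ 0 and w(z)^ℓ · Q(z) = P(z) for all z ∈ U. Define a sequence of polynomials V_n by V₀ = 1 and V_{n+1} = ℓ·P·Q·V_n′ − ((nℓ − 1)·P′·Q + (nℓ + 1)·P·Q′)·V_n. Then for every n ≥ 0 and every z ∈ U: (w⁽ⁿ⁾(z))^ℓ · ℓ^{nℓ} · P(z)^{nℓ} · Q(z)^{nℓ+1} = P(z) · (V_n(z))^ℓ, where w⁽ⁿ⁾ is the n-th derivative of w. Moreover, if P has degree d₁ and Q has degree d₂, then deg V_n ≤ n(d₁ + d₂ − 1) for every n. -/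
open Complex Metric Filter Set Topology Polynomial

/-- **Lemma 6.7 (derivative curves of `w^ℓ = P/Q`).** If `w` is an analytic branch
of the algebraic function `w^ℓ·Q = P` on an open set `U`, and `V n` are the
polynomials given by `V 0 = 1` and
`V (n+1) = ℓ·P·Q·V n′ − ((nℓ−1)·P′·Q + (nℓ+1)·P·Q′)·V n`, then
`(w⁽ⁿ⁾)^ℓ · ℓ^{nℓ} · P^{nℓ} · Q^{nℓ+1} = P · (V n)^ℓ` on `U`; moreover
`deg (V n) ≤ n(deg P + deg Q − 1)`. -/
theorem derivative_curve_recurrence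
    (ℓ : ℕ) (hℓ : 1 ≤ ℓ) (P Q : Polynomial ℂ)
    (U : Set ℂ) (hU : IsOpen U) (w : ℂ → ℂ)
    (hw : DifferentiableOn ℂ w U)
    (hPQ : ∀ z ∈ U, P.eval z ≠ 0 ∧ Q.eval z ≠ 0 ∧ w z ^ ℓ * Q.eval z = P.eval z)
    (V : ℕ → Polynomial ℂ) (hV0 : V 0 = 1)
    (hVs : ∀ n : ℕ, V (n + 1) =
        Polynomial.C (ℓ : ℂ) * P * Q * (V n).derivative
          - (Polynomial.C (((n * ℓ : ℕ) : ℂ) - 1) * P.derivative * Q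
              + Polynomial.C (((n * ℓ : ℕ) : ℂ) + 1) * P * Q.derivative) * V n) :
    (∀ n : ℕ, ∀ z ∈ U,
        (iteratedDeriv n w z) ^ ℓ * (ℓ : ℂ) ^ (n * ℓ) * P.eval z ^ (n * ℓ)
            * Q.eval z ^ (n * ℓ + 1)
          = P.eval z * ((V n).eval z) ^ ℓ)
    ∧ ∀ n : ℕ, (V n).natDegree ≤ n * (P.natDegree + Q.natDegree - 1) := by
  constructor
  · -- the analytic identity
    obtain ⟨m, rfl⟩ : ∃ m, ℓ = m + 1 := ⟨ℓ - 1, (Nat.succ_pred_eq_of_pos hℓ).symm⟩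
    have hay : AnalyticOnNhd ℂ w U := hw.analyticOnNhd hU
    have hitd : ∀ k : ℕ, AnalyticOnNhd ℂ (iteratedDeriv k w) U := by
      intro k
      induction k with
      | zero => simpa [iteratedDeriv_zero] using hay
      | succ k ih => rw [iteratedDeriv_succ]; exact ih.deriv
    intro n
    induction n with
    | zero =>
      intro z hz
      obtain ⟨hP0, hQ0, hwz⟩ := hPQ z hz
      simp only [iteratedDeriv_zero, Nat.zero_mul, pow_zero, mul_one, one_mul, zero_add,
        pow_one, hV0, eval_one, one_pow]
      linear_combination hwz
    | succ n IH =>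
      -- core: the identity at points where `V n` does not vanish
      have core : ∀ z ∈ U, (V n).eval z ≠ 0 →
          iteratedDeriv (n + 1) w z ^ (m + 1) * ((m + 1 : ℕ) : ℂ) ^ ((n + 1) * (m + 1))
              * P.eval z ^ ((n + 1) * (m + 1)) * Q.eval z ^ ((n + 1) * (m + 1) + 1)
            = P.eval z * (V (n + 1)).eval z ^ (m + 1) := by
        intro z hz hv
        obtain ⟨hP0, hQ0, -⟩ := hPQ z hz
        have hE := IH z hz
        have hF : HasDerivAt (iteratedDeriv n w) (iteratedDeriv (n + 1) w z) z := by
          rw [iteratedDeriv_succ]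
          exact ((hitd n z hz).differentiableAt).hasDerivAt
        have hP' : HasDerivAt (fun y => P.eval y) (P.derivative.eval z) z := P.hasDerivAt z
        have hQ' : HasDerivAt (fun y => Q.eval y) (Q.derivative.eval z) z := Q.hasDerivAt z
        have hVd : HasDerivAt (fun y => (V n).eval y) ((V n).derivative.eval z) z :=
          (V n).hasDerivAt z
        have hg := (((hF.pow (m + 1)).mul_const (((m + 1 : ℕ) : ℂ) ^ (n * (m + 1)))).mul
          (hP'.pow (n * (m + 1)))).mul (hQ'.pow (n * (m + 1) + 1))
        have hh := hP'.mul (hVd.pow (m + 1))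
        have hder : deriv (fun y => iteratedDeriv n w y ^ (m + 1)
              * ((m + 1 : ℕ) : ℂ) ^ (n * (m + 1)) * P.eval y ^ (n * (m + 1))
              * Q.eval y ^ (n * (m + 1) + 1)) z
            = deriv (fun y => P.eval y * ((V n).eval y) ^ (m + 1)) z :=
          Filter.EventuallyEq.deriv_eq
            (Filter.eventuallyEq_of_mem (hU.mem_nhds hz) (fun y hy => IH y hy))
        have hD := (hg.deriv.symm.trans hder).trans hh.deriv
        simp only [Nat.add_sub_cancel] at hD
        simp only [Pi.pow_apply, Pi.mul_apply] at hD
        push_cast at hD hE ⊢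
        have haM : ((n : ℂ) * ((m : ℂ) + 1)) * P.eval z ^ (n * (m + 1) - 1) * P.eval z
            = ((n : ℂ) * ((m : ℂ) + 1)) * P.eval z ^ (n * (m + 1)) := by
          rcases Nat.eq_zero_or_pos n with hn | hn
          · subst hn; simp
          · have h1 : 1 ≤ n * (m + 1) := Nat.one_le_iff_ne_zero.mpr
              (Nat.mul_ne_zero (Nat.one_le_iff_ne_zero.mp hn) (Nat.succ_ne_zero m))
            rw [mul_assoc, ← pow_succ, Nat.sub_add_cancel h1]
        have hv1 : (V (n + 1)).eval z
            = ((m : ℂ) + 1) * P.eval z * Q.eval z * (V n).derivative.eval z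
              - (((n : ℂ) * ((m : ℂ) + 1) - 1) * P.derivative.eval z * Q.eval z
                  + ((n : ℂ) * ((m : ℂ) + 1) + 1) * P.eval z * Q.derivative.eval z)
                * (V n).eval z := by
          rw [hVs n]
          simp only [eval_sub, eval_add, eval_mul, eval_C]
          push_cast
          ring
        have key : ((m : ℂ) + 1) * P.eval z * Q.eval z * (V n).eval z
              * iteratedDeriv (n + 1) w z
            = (V (n + 1)).eval z * iteratedDeriv n w z := by
          apply mul_right_cancel₀ (mul_ne_zero hP0 (pow_ne_zero m hv))
          rw [hv1]
          linear_combination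
            (iteratedDeriv n w z * P.eval z * Q.eval z) * hD
            - (((m : ℂ) + 1) * iteratedDeriv (n + 1) w z * P.eval z * Q.eval z
                + ((n : ℂ) * ((m : ℂ) + 1)) * P.derivative.eval z * Q.eval z
                    * iteratedDeriv n w z
                + (((n : ℂ) * ((m : ℂ) + 1)) + 1) * P.eval z * Q.derivative.eval z
                    * iteratedDeriv n w z) * hE
            - (iteratedDeriv n w z ^ (m + 1) * ((m : ℂ) + 1) ^ (n * (m + 1))
                * P.derivative.eval z * Q.eval z ^ (n * (m + 1) + 1)
                * iteratedDeriv n w z * Q.eval z) * haM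
        have keyp : (((m : ℂ) + 1) * P.eval z * Q.eval z * (V n).eval z
              * iteratedDeriv (n + 1) w z) ^ (m + 1)
            = ((V (n + 1)).eval z * iteratedDeriv n w z) ^ (m + 1) := by rw [key]
        simp only [mul_pow] at keyp
        apply mul_right_cancel₀ (pow_ne_zero (m + 1) hv)
        linear_combination
          (((m : ℂ) + 1) ^ (n * (m + 1)) * P.eval z ^ (n * (m + 1))
              * Q.eval z ^ (n * (m + 1) + 1)) * keyp
          + ((V (n + 1)).eval z) ^ (m + 1) * hE
      intro z hz
      by_cases hVn0 : V n = 0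
      · -- degenerate case: `V n` is the zero polynomial
        have hF0 : ∀ y ∈ U, iteratedDeriv n w y = 0 := by
          intro y hy
          obtain ⟨hP0, hQ0, -⟩ := hPQ y hy
          have h := IH y hy
          rw [hVn0] at h
          simp only [eval_zero, ne_eq, Nat.succ_ne_zero, not_false_iff, zero_pow, mul_zero] at h
          have hL : ((m + 1 : ℕ) : ℂ) ≠ 0 := Nat.cast_ne_zero.mpr (Nat.succ_ne_zero m)
          have h4 : iteratedDeriv n w y ^ (m + 1) = 0 := by
            by_contra hc
            exact (mul_ne_zero (mul_ne_zero (mul_ne_zero hc (pow_ne_zero _ hL))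
              (pow_ne_zero _ hP0)) (pow_ne_zero _ hQ0)) h
          exact pow_eq_zero_iff (Nat.succ_ne_zero m) |>.1 h4
        have hd0 : iteratedDeriv (n + 1) w z = 0 := by
          rw [iteratedDeriv_succ]
          have : deriv (iteratedDeriv n w) z = deriv (fun _ : ℂ => (0 : ℂ)) z :=
            Filter.EventuallyEq.deriv_eq
              (Filter.eventuallyEq_of_mem (hU.mem_nhds hz) (fun y hy => hF0 y hy))
          simpa using this
        have hV1 : V (n + 1) = 0 := by rw [hVs n, hVn0]; simp
        rw [hd0, hV1]
        simp [zero_pow]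
      · by_cases hvz : (V n).eval z = 0
        · -- continuity argument at the (finitely many) zeros of `V n`
          have hSfin : Set.Finite {y : ℂ | (V n).IsRoot y} := (V n).finite_setOf_isRoot hVn0
          set S := {y : ℂ | (V n).IsRoot y} with hS
          have hTop : IsOpen (U ∩ (S \ {z})ᶜ) :=
            hU.inter (hSfin.subset diff_subset).isClosed.isOpen_compl
          have hzmem : z ∈ U ∩ (S \ {z})ᶜ := ⟨hz, by simp⟩
          have hsub : {z}ᶜ ∩ (U ∩ (S \ {z})ᶜ) ⊆ U \ S := by
            rintro y ⟨hy1, hy2, hy3⟩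
            refine ⟨hy2, fun hyS => hy3 ⟨hyS, hy1⟩⟩
          have hne : (𝓝[U \ S] z).NeBot := by
            have h1 : (𝓝[≠] z).NeBot := inferInstance
            have h2 : 𝓝[({z}ᶜ : Set ℂ)] z = 𝓝[{z}ᶜ ∩ (U ∩ (S \ {z})ᶜ)] z :=
              nhdsWithin_restrict _ hzmem hTop
            exact Filter.NeBot.mono (h2 ▸ h1) (nhdsWithin_mono z hsub)
          have hc1 : ContinuousAt (fun y => iteratedDeriv (n + 1) w y ^ (m + 1)
              * ((m + 1 : ℕ) : ℂ) ^ ((n + 1) * (m + 1)) * P.eval y ^ ((n + 1) * (m + 1))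
              * Q.eval y ^ ((n + 1) * (m + 1) + 1)) z := by
            have hca : ContinuousAt (iteratedDeriv (n + 1) w) z :=
              (hitd (n + 1) z hz).differentiableAt.continuousAt
            exact (((hca.pow _).mul continuousAt_const).mul
              ((P.continuous.continuousAt).pow _)).mul ((Q.continuous.continuousAt).pow _)
          have hc2 : ContinuousAt (fun y => P.eval y * ((V (n + 1)).eval y) ^ (m + 1)) z :=
            (P.continuous.continuousAt).mul (((V (n + 1)).continuous.continuousAt).pow _)
          have heqOn : ∀ y ∈ U \ S, iteratedDeriv (n + 1) w y ^ (m + 1)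
              * ((m + 1 : ℕ) : ℂ) ^ ((n + 1) * (m + 1)) * P.eval y ^ ((n + 1) * (m + 1))
              * Q.eval y ^ ((n + 1) * (m + 1) + 1)
              = P.eval y * ((V (n + 1)).eval y) ^ (m + 1) := fun y hy => core y hy.1 hy.2
          have t1 : Filter.Tendsto (fun y => iteratedDeriv (n + 1) w y ^ (m + 1)
              * ((m + 1 : ℕ) : ℂ) ^ ((n + 1) * (m + 1)) * P.eval y ^ ((n + 1) * (m + 1))
              * Q.eval y ^ ((n + 1) * (m + 1) + 1)) (𝓝[U \ S] z)
              (𝓝 (iteratedDeriv (n + 1) w z ^ (m + 1)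
                * ((m + 1 : ℕ) : ℂ) ^ ((n + 1) * (m + 1)) * P.eval z ^ ((n + 1) * (m + 1))
                * Q.eval z ^ ((n + 1) * (m + 1) + 1))) := hc1.continuousWithinAt
          have t2 : Filter.Tendsto (fun y => iteratedDeriv (n + 1) w y ^ (m + 1)
              * ((m + 1 : ℕ) : ℂ) ^ ((n + 1) * (m + 1)) * P.eval y ^ ((n + 1) * (m + 1))
              * Q.eval y ^ ((n + 1) * (m + 1) + 1)) (𝓝[U \ S] z)
              (𝓝 (P.eval z * ((V (n + 1)).eval z) ^ (m + 1))) := by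
            refine Filter.Tendsto.congr' ?_ hc2.continuousWithinAt
            exact Filter.eventually_of_mem self_mem_nhdsWithin
              (fun y hy => (heqOn y hy).symm)
          exact tendsto_nhds_unique t1 t2
        · exact core z hz hvz
  · -- the degree bound
    intro n
    induction n with
    | zero => simp [hV0]
    | succ n IH =>
      rw [hVs n]
      refine le_trans (natDegree_sub_le _ _) ?_
      rw [max_le_iff]
      have hd1 : natDegree (C (ℓ : ℂ) * P * Q * (V n).derivative)
          ≤ (n + 1) * (P.natDegree + Q.natDegree - 1) := by
        by_cases hdv : (V n).derivative = 0
        · simp [hdv]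
        · have h1 : (V n).derivative.natDegree ≤ (V n).natDegree - 1 :=
            natDegree_derivative_le _
          have h2 : 1 ≤ (V n).natDegree := by
            by_contra h
            push_neg at h
            interval_cases h' : (V n).natDegree
            · exact hdv (by rw [eq_C_of_natDegree_eq_zero h']; simp)
          calc natDegree (C (ℓ : ℂ) * P * Q * (V n).derivative)
              ≤ natDegree (C (ℓ : ℂ) * P * Q) + natDegree ((V n).derivative) :=
                natDegree_mul_le
            _ ≤ (natDegree (C (ℓ : ℂ) * P) + natDegree Q) + natDegree ((V n).derivative) :=
                Nat.add_le_add_right natDegree_mul_le _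
            _ ≤ ((natDegree (C (ℓ : ℂ)) + natDegree P) + natDegree Q)
                  + natDegree ((V n).derivative) :=
                Nat.add_le_add_right (Nat.add_le_add_right natDegree_mul_le _) _
            _ ≤ (n + 1) * (P.natDegree + Q.natDegree - 1) := by
                rw [natDegree_C, Nat.succ_mul]
                have hVn := IH
                generalize hT : n * (P.natDegree + Q.natDegree - 1) = t at hVn ⊢
                omega
      have hd2 : natDegree ((C (((n * ℓ : ℕ) : ℂ) - 1) * P.derivative * Q
            + C (((n * ℓ : ℕ) : ℂ) + 1) * P * Q.derivative) * V n)
          ≤ (n + 1) * (P.natDegree + Q.natDegree - 1) := by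
        have hB1 : natDegree (C (((n * ℓ : ℕ) : ℂ) - 1) * P.derivative * Q)
            ≤ P.natDegree + Q.natDegree - 1 := by
          by_cases hP' : P.derivative = 0
          · simp [hP']
          · have h1 : P.derivative.natDegree ≤ P.natDegree - 1 := natDegree_derivative_le _
            have h2 : 1 ≤ P.natDegree := by
              by_contra h
              push_neg at h
              interval_cases h' : P.natDegree
              · exact hP' (by rw [eq_C_of_natDegree_eq_zero h']; simp)
            calc natDegree (C (((n * ℓ : ℕ) : ℂ) - 1) * P.derivative * Q)
                ≤ natDegree (C (((n * ℓ : ℕ) : ℂ) - 1) * P.derivative) + natDegree Q :=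
                  natDegree_mul_le
              _ ≤ (natDegree (C (((n * ℓ : ℕ) : ℂ) - 1)) + natDegree P.derivative)
                    + natDegree Q := Nat.add_le_add_right natDegree_mul_le _
              _ ≤ P.natDegree + Q.natDegree - 1 := by rw [natDegree_C]; omega
        have hB2 : natDegree (C (((n * ℓ : ℕ) : ℂ) + 1) * P * Q.derivative)
            ≤ P.natDegree + Q.natDegree - 1 := by
          by_cases hQ' : Q.derivative = 0
          · simp [hQ']
          · have h1 : Q.derivative.natDegree ≤ Q.natDegree - 1 := natDegree_derivative_le _
            have h2 : 1 ≤ Q.natDegree := by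
              by_contra h
              push_neg at h
              interval_cases h' : Q.natDegree
              · exact hQ' (by rw [eq_C_of_natDegree_eq_zero h']; simp)
            calc natDegree (C (((n * ℓ : ℕ) : ℂ) + 1) * P * Q.derivative)
                ≤ natDegree (C (((n * ℓ : ℕ) : ℂ) + 1) * P) + natDegree Q.derivative :=
                  natDegree_mul_le
              _ ≤ (natDegree (C (((n * ℓ : ℕ) : ℂ) + 1)) + natDegree P)
                    + natDegree Q.derivative := Nat.add_le_add_right natDegree_mul_le _
              _ ≤ P.natDegree + Q.natDegree - 1 := by rw [natDegree_C]; omega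
        calc natDegree ((C (((n * ℓ : ℕ) : ℂ) - 1) * P.derivative * Q
              + C (((n * ℓ : ℕ) : ℂ) + 1) * P * Q.derivative) * V n)
            ≤ natDegree (C (((n * ℓ : ℕ) : ℂ) - 1) * P.derivative * Q
                + C (((n * ℓ : ℕ) : ℂ) + 1) * P * Q.derivative) + natDegree (V n) :=
              natDegree_mul_le
          _ ≤ max (natDegree (C (((n * ℓ : ℕ) : ℂ) - 1) * P.derivative * Q))
                (natDegree (C (((n * ℓ : ℕ) : ℂ) + 1) * P * Q.derivative))
                + natDegree (V n) := Nat.add_le_add_right (natDegree_add_le _ _) _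
          _ ≤ (n + 1) * (P.natDegree + Q.natDegree - 1) := by
              rw [Nat.succ_mul]
              have hVn := IH
              generalize hT : n * (P.natDegree + Q.natDegree - 1) = t at hVn ⊢
              omega
      exact ⟨hd1, hd2⟩
end

section
/- Let U ⊆ ℂ be open with z² ≠ 1 for all z ∈ U, and let w : U → ℂ be analytic with w(z)² = 1 − z² on U. Define a sequence of polynomials U_n by U₁(X) = X and U_n = (2n − 3)·X·U_{n−1} + (1 − X²)·U_{n−1}′ for n ≥ 2. Then for every n ≥ 1 and every z ∈ U: (w⁽ⁿ⁾(z))² · (z² − 1)^{2n−1} = −(U_n(z))², where w⁽ⁿ⁾ is the n-th derivative of w. -/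
open Complex Metric Filter Set Topology Polynomial

/-- **Corollary 6.10 (derivative curves of the unit circle `z² + w² = 1`).** If `w`
is an analytic branch of `w² = 1 − z²` on an open set `U` avoiding `z² = 1`, and
`U n` are the polynomials given by `U 1 = X` and
`U n = (2n−3)·X·U (n−1) + (1 − X²)·U (n−1)′` for `n ≥ 2`, then for all `n ≥ 1`
and `z ∈ U`: `(w⁽ⁿ⁾(z))² · (z² − 1)^{2n−1} = −(U n (z))²`. -/
theorem circle_derivative_curve
    (U : Set ℂ) (hUopen : IsOpen U) (hU1 : ∀ z ∈ U, z ^ 2 ≠ 1)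
    (w : ℂ → ℂ) (hw : DifferentiableOn ℂ w U)
    (hww : ∀ z ∈ U, w z ^ 2 = 1 - z ^ 2)
    (V : ℕ → Polynomial ℂ) (hV1 : V 1 = Polynomial.X)
    (hVrec : ∀ n : ℕ, 2 ≤ n → V n =
        Polynomial.C ((2 * (n : ℤ) - 3 : ℤ) : ℂ) * Polynomial.X * V (n - 1)
          + (1 - Polynomial.X ^ 2) * (V (n - 1)).derivative) :
    ∀ n : ℕ, 1 ≤ n → ∀ z ∈ U,
      (iteratedDeriv n w z) ^ 2 * (z ^ 2 - 1) ^ (2 * n - 1)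
        = -(((V n).eval z) ^ 2) := by
  have hne : ∀ z ∈ U, (1 : ℂ) - z ^ 2 ≠ 0 := by
    intro z hz h
    exact hU1 z hz (by linear_combination -h)
  have hwne : ∀ z ∈ U, w z ≠ 0 := by
    intro z hz h
    exact hne z hz (by rw [← hww z hz, h]; ring)
  have hderiv : ∀ z ∈ U, HasDerivAt w (-z / w z) z := by
    intro z hz
    have hd : DifferentiableAt ℂ w z :=
      hw.differentiableAt (hUopen.mem_nhds hz)
    have h1 : HasDerivAt (fun x => w x ^ 2) (2 * w z ^ 1 * deriv w z) z := by
      simpa using hd.hasDerivAt.fun_pow 2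
    have h2 : HasDerivAt (fun x : ℂ => 1 - x ^ 2) (2 * w z ^ 1 * deriv w z) z := by
      apply h1.congr_of_eventuallyEq
      filter_upwards [hUopen.mem_nhds hz] with x hx
      exact (hww x hx).symm
    have h3 : HasDerivAt (fun x : ℂ => 1 - x ^ 2) (-(2 * z ^ 1)) z :=
      ((hasDerivAt_pow 2 z).const_sub 1).congr_deriv (by push_cast; ring)
    have huniq := h2.unique h3
    have : deriv w z = -z / w z := by
      field_simp [hwne z hz]
      linear_combination huniq / 2
    rw [← this]; exact hd.hasDerivAt
  have key : ∀ n : ℕ, 1 ≤ n → ∀ z ∈ U,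
      iteratedDeriv n w z = -(V n).eval z * w z / (1 - z ^ 2) ^ n := by
    intro n hn
    induction n, hn using Nat.le_induction with
    | base =>
      intro z hz
      have haw := hww z hz
      have hW := hwne z hz
      rw [iteratedDeriv_one, (hderiv z hz).deriv, hV1, eval_X, pow_one, ← haw]
      field_simp
    | succ n hn IH =>
      intro z hz
      obtain ⟨m, rfl⟩ := Nat.exists_eq_add_of_le hn
      set P := (V (1 + m)).eval z with hP
      set Q := ((V (1 + m)).derivative).eval z with hQ
      have hev : iteratedDeriv (1 + m) w =ᶠ[𝓝 z]
          (fun x => -(V (1 + m)).eval x * w x / (1 - x ^ 2) ^ (1 + m)) := by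
        filter_upwards [hUopen.mem_nhds hz] with x hx
        exact IH x hx
      rw [iteratedDeriv_succ, hev.deriv_eq]
      have hp : HasDerivAt (fun x => (V (1 + m)).eval x) Q z := (V (1 + m)).hasDerivAt z
      have hnum : HasDerivAt (fun x => -(V (1 + m)).eval x * w x)
          (-Q * w z + -P * (-z / w z)) z := hp.neg.mul (hderiv z hz)
      have hq : HasDerivAt (fun x : ℂ => 1 - x ^ 2) (-(2 * z ^ 1)) z :=
        ((hasDerivAt_pow 2 z).const_sub 1).congr_deriv (by push_cast; ring)
      have hden : HasDerivAt (fun x : ℂ => (1 - x ^ 2) ^ (1 + m))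
          ((1 + m : ℕ) * (1 - z ^ 2) ^ (1 + m - 1) * (-(2 * z ^ 1))) z := hq.pow (1 + m)
      have hdiv := hnum.fun_div hden (pow_ne_zero _ (hne z hz))
      rw [hdiv.deriv]
      have hVe : (V (1 + m + 1)).eval z = (2 * ((1 + m : ℕ) : ℂ) + 2 - 3) * z * P
          + (1 - z ^ 2) * Q := by
        rw [hVrec (1 + m + 1) (by omega)]
        simp only [Nat.add_sub_cancel, eval_add, eval_mul, eval_C, eval_X, eval_sub,
          eval_one, eval_pow, ← hP, ← hQ]
        push_cast
        ring
      have hW := hwne z hz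
      have ha := hne z hz
      have haw := hww z hz
      have e : -z / w z = -z * w z / (1 - z ^ 2) := by
        rw [← haw]
        field_simp
      rw [hVe, e]
      simp only [Nat.add_sub_cancel, Nat.add_sub_cancel_left, ← hP, pow_one]
      push_cast
      field_simp
      ring
  intro n hn z hz
  obtain ⟨m, rfl⟩ := Nat.exists_eq_add_of_le hn
  rw [key (1 + m) hn z hz]
  have hW := hwne z hz
  have ha := hne z hz
  have haw := hww z hz
  have h2 : 2 * (1 + m) - 1 = 2 * m + 1 := by omega
  rw [h2]
  have hz2 : (z ^ 2 - 1) = -(1 - z ^ 2) := by ring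
  rw [hz2]
  rw [Odd.neg_pow ⟨m, by ring⟩ (1 - z ^ 2)]
  field_simp
  linear_combination -((V (1+m)).eval z)^2 * (1 - z^2)^(2*m+1) * haw
end

section
/- Let f : ℂ ∖ {i, −i} → ℂ be f(z) = 2i/(z² + 1). Then for every n ∈ ℕ and every z ∈ ℂ ∖ {i, −i}: f⁽ⁿ⁾(z) = (−1)ⁿ·n!·( (z − i)^{−(n+1)} − (z + i)^{−(n+1)} ). Moreover, for every n ∈ ℕ the zero set of f⁽ⁿ⁾ in ℂ ∖ {i, −i} equals { tan θ : θ ∈ (−π/2, π/2), exp(2i(n+1)θ) = (−1)^{n+1} }; in particular it consists of exactly n distinct real numbers (explicitly, θ runs over the multiples of π/(n+1) in (−π/2, π/2) when n is odd, and over π/(2n+2) + jπ/(n+1), j ∈ ℤ, lying in (−π/2, π/2) when n is even). -/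
open Complex Metric Filter Set Topology

section FirstConcreteExampleAux

open Polynomial

private lemma fce_aux_deriv (f : ℂ → ℂ) (hf : ∀ z : ℂ, f z = 2 * Complex.I / (z ^ 2 + 1)) :
    ∀ n : ℕ, ∀ z : ℂ, z ≠ Complex.I → z ≠ -Complex.I →
      iteratedDeriv n f z = (-1) ^ n * (n.factorial : ℂ) *
        ((z - Complex.I) ^ (-(n + 1 : ℤ)) - (z + Complex.I) ^ (-(n + 1 : ℤ))) := by
  intro n
  induction n with
  | zero =>
    intro z h1 h2
    have hz1 : z - I ≠ 0 := sub_ne_zero.mpr h1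
    have hz2 : z + I ≠ 0 := by
      intro h; apply h2; linear_combination h
    have hq : z ^ 2 + 1 = (z - I) * (z + I) := by
      ring_nf
      simp [Complex.I_sq]
      ring
    rw [iteratedDeriv_zero, hf]
    simp only [pow_zero, Nat.factorial_zero, Nat.cast_one, one_mul, Nat.cast_zero, zero_add]
    rw [hq, zpow_neg_one, zpow_neg_one]
    field_simp
    ring
  | succ n ih =>
    intro z h1 h2
    have hz1 : z - I ≠ 0 := sub_ne_zero.mpr h1
    have hz2 : z + I ≠ 0 := by intro h; apply h2; linear_combination h
    set g : ℂ → ℂ := fun w => (-1) ^ n * (n.factorial : ℂ) *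
        ((w - Complex.I) ^ (-(n + 1 : ℤ)) - (w + Complex.I) ^ (-(n + 1 : ℤ))) with hg
    have hopen : IsOpen ({Complex.I, -Complex.I}ᶜ : Set ℂ) :=
      (Set.toFinite {Complex.I, -Complex.I}).isClosed.isOpen_compl
    have hmem : z ∈ ({Complex.I, -Complex.I}ᶜ : Set ℂ) := by
      simp [Set.mem_compl_iff, h1, h2]
    have hev : iteratedDeriv n f =ᶠ[nhds z] g := by
      filter_upwards [hopen.mem_nhds hmem] with w hw
      simp only [Set.mem_compl_iff, Set.mem_insert_iff, Set.mem_singleton_iff, not_or] at hw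
      exact ih w hw.1 hw.2
    rw [iteratedDeriv_succ, hev.deriv_eq]
    have hd1 : HasDerivAt (fun w : ℂ => (w - Complex.I) ^ (-(n + 1 : ℤ)))
        ((-(n+1 : ℤ)) * (z - I) ^ (-(n + 1 : ℤ) - 1)) z := by
      have := (hasDerivAt_zpow (-(n+1 : ℤ)) (z - I) (Or.inl hz1)).comp z
        ((hasDerivAt_id z).sub_const I)
      simpa [Function.comp_def] using this
    have hd2 : HasDerivAt (fun w : ℂ => (w + Complex.I) ^ (-(n + 1 : ℤ)))
        ((-(n+1 : ℤ)) * (z + I) ^ (-(n + 1 : ℤ) - 1)) z := by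
      have := (hasDerivAt_zpow (-(n+1 : ℤ)) (z + I) (Or.inl hz2)).comp z
        ((hasDerivAt_id z).add_const I)
      simpa [Function.comp_def] using this
    have hD : HasDerivAt g ((-1) ^ n * (n.factorial : ℂ) *
        ((-(n+1 : ℤ)) * (z - I) ^ (-(n + 1 : ℤ) - 1) -
          (-(n+1 : ℤ)) * (z + I) ^ (-(n + 1 : ℤ) - 1))) z :=
      (hd1.sub hd2).const_mul _
    rw [hD.deriv]
    have he : (-(n + 1 : ℤ) - 1) = -((n+1 : ℕ) + 1 : ℤ) := by push_cast; ring
    rw [he]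
    rw [Nat.factorial_succ]
    push_cast
    ring

private lemma fce_aux_tan (m : ℕ) (θ : ℝ) (hθ : Real.cos θ ≠ 0) :
    (((Real.tan θ : ℂ) + I) ^ m = ((Real.tan θ : ℂ) - I) ^ m) ↔
      Complex.exp (2 * I * m * θ) = (-1) ^ m := by
  set T : ℂ := (Real.tan θ : ℂ) with hT
  set c : ℂ := (Real.cos θ : ℂ) with hc'
  have hc : c ≠ 0 := by simpa [hc'] using Complex.ofReal_ne_zero.mpr hθ
  have hcc : Complex.cos (θ : ℂ) ≠ 0 := by
    rw [← Complex.ofReal_cos]; exact_mod_cast hθ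
  set E : ℂ := Complex.exp (θ * I) with hE'
  set F : ℂ := Complex.exp (-θ * I) with hF'
  have hE : E ≠ 0 := Complex.exp_ne_zero _
  have hF : F ≠ 0 := Complex.exp_ne_zero _
  have hFE : F * E = 1 := by
    rw [hF', hE', ← Complex.exp_add]
    ring_nf
    exact Complex.exp_zero
  have h1 : (T - I) * c = -I * E := by
    rw [hT, hc', hE', Real.tan_eq_sin_div_cos, Complex.exp_mul_I]
    push_cast
    field_simp [hcc]
    linear_combination (Complex.sin (θ:ℂ)) * Complex.I_sq
  have h2 : (T + I) * c = I * F := by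
    rw [hT, hc', hF', Real.tan_eq_sin_div_cos]
    rw [Complex.exp_mul_I, Complex.cos_neg, Complex.sin_neg]
    push_cast
    field_simp [hcc]
    linear_combination (Complex.sin (θ:ℂ)) * Complex.I_sq
  have hexp : Complex.exp (2 * I * m * θ) = E ^ (2 * m) := by
    rw [hE', ← Complex.exp_nat_mul]
    congr 1
    push_cast
    ring
  rw [hexp]
  have hsq : ((-1 : ℂ) ^ m) * ((-1 : ℂ) ^ m) = 1 := by
    rw [← mul_pow]; norm_num
  constructor
  · intro h
    have H : (I * F) ^ m = (-I * E) ^ m := by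
      rw [← h2, ← h1, mul_pow, mul_pow, h]
    have H2 : I ^ m * (F * E) ^ m = (-1) ^ m * I ^ m * (E ^ (2*m)) := by
      calc I ^ m * (F * E) ^ m = (I * F) ^ m * E ^ m := by rw [mul_pow, mul_pow]; ring
        _ = (-1) ^ m * I ^ m * E ^ m * E ^ m := by rw [H, mul_pow, neg_pow]
        _ = (-1) ^ m * I ^ m * E ^ (2*m) := by rw [two_mul, pow_add]; ring
    rw [hFE, one_pow, mul_one] at H2
    have H3 : (1 : ℂ) = (-1) ^ m * E ^ (2 * m) := by
      have hIne : (I : ℂ) ^ m ≠ 0 := pow_ne_zero _ I_ne_zero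
      have : I ^ m * 1 = I ^ m * ((-1) ^ m * E ^ (2 * m)) := by
        conv_lhs => rw [mul_one, H2]
        ring
      exact mul_left_cancel₀ hIne this
    linear_combination (-(-1 : ℂ) ^ m) * H3 + (- E ^ (2 * m)) * hsq
  · intro h
    have hEF : E ^ 2 * F = E := by
      rw [sq, mul_assoc, mul_comm E F, hFE, mul_one]
    have hone : ((-1 : ℂ) * E ^ 2) ^ m = 1 := by
      rw [mul_pow, ← pow_mul, h, ← mul_pow]; norm_num
    have key : (I * F) ^ m = (-I * E) ^ m := by
      have hstep : (-I * E : ℂ) = (-1 * E ^ 2) * (I * F) := by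
        rw [show ((-1 : ℂ) * E ^ 2) * (I * F) = -I * (E ^ 2 * F) by ring, hEF]
      rw [hstep, mul_pow (-1 * E ^ 2) (I * F), hone, one_mul]
    calc (T + I) ^ m = ((T + I) * c) ^ m * (c ^ m)⁻¹ := by
          rw [mul_pow]; field_simp
      _ = ((T - I) * c) ^ m * (c ^ m)⁻¹ := by rw [h1, h2, key]
      _ = (T - I) ^ m := by rw [mul_pow]; field_simp

private lemma fce_aux_im (m : ℕ) (hm : 0 < m) (z : ℂ) (h : (z + I) ^ m = (z - I) ^ m) :
    z.im = 0 := by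
  have h2 : Complex.normSq (z + I) ^ m = Complex.normSq (z - I) ^ m := by
    rw [← map_pow, ← map_pow, h]
  have h3 : Complex.normSq (z + I) = Complex.normSq (z - I) :=
    (pow_left_inj₀ (Complex.normSq_nonneg _) (Complex.normSq_nonneg _) hm.ne').mp h2
  simp only [Complex.normSq_apply, Complex.add_re, Complex.add_im, Complex.sub_re,
    Complex.sub_im, Complex.I_re, Complex.I_im] at h3
  nlinarith [h3]

private lemma fce_aux_zero (n : ℕ) (z : ℂ) :
    ((-1 : ℂ) ^ n * (n.factorial : ℂ) *
      ((z - I) ^ (-(n + 1 : ℤ)) - (z + I) ^ (-(n + 1 : ℤ))) = 0) ↔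
      (z + I) ^ (n + 1) = (z - I) ^ (n + 1) := by
  have hc : ((-1 : ℂ) ^ n * (n.factorial : ℂ)) ≠ 0 := by
    apply mul_ne_zero (pow_ne_zero _ (by norm_num))
    exact_mod_cast Nat.factorial_ne_zero n
  rw [mul_eq_zero]
  simp only [hc, false_or, sub_eq_zero]
  rw [show (-(n + 1 : ℤ)) = -((n + 1 : ℕ) : ℤ) by push_cast; ring]
  rw [zpow_neg, zpow_neg, zpow_natCast, zpow_natCast, inv_inj, eq_comm]

private lemma fce_aux_count (m : ℕ) (hm : 0 < m) :
    {z : ℂ | z ≠ I ∧ z ≠ -I ∧ (z + I) ^ m = (z - I) ^ m}.ncard = m - 1 := by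
  set T : Set ℂ := (↑(nthRootsFinset m (1 : ℂ) \ {1}) : Set ℂ) with hT
  set g : ℂ → ℂ := fun w => I * (w + 1) / (w - 1) with hg
  have hTmem : ∀ w : ℂ, w ∈ T ↔ w ^ m = 1 ∧ w ≠ 1 := by
    intro w
    simp [hT, Finset.mem_sdiff, Polynomial.mem_nthRootsFinset hm]
  have hset : {z : ℂ | z ≠ I ∧ z ≠ -I ∧ (z + I) ^ m = (z - I) ^ m} = g '' T := by
    ext z
    simp only [Set.mem_setOf_eq, Set.mem_image]
    constructor
    · rintro ⟨h1, h2, h3⟩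
      have hz1 : z - I ≠ 0 := sub_ne_zero.mpr h1
      have hz2 : z + I ≠ 0 := fun h => h2 (by linear_combination h)
      refine ⟨(z + I) / (z - I), ?_, ?_⟩
      · rw [hTmem]
        constructor
        · rw [div_pow, h3, div_self (pow_ne_zero _ hz1)]
        · intro h
          rw [div_eq_one_iff_eq hz1] at h
          have : (2 : ℂ) * I = 0 := by linear_combination h
          simp at this
      · rw [hg]
        have hww : (z + I) / (z - I) - 1 = 2 * I / (z - I) := by
          field_simp
          ring
        have hww2 : (z + I) / (z - I) + 1 = 2 * z / (z - I) := by
          field_simp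
          ring
        simp only []
        rw [hww, hww2]
        field_simp
    · rintro ⟨w, hw, rfl⟩
      rw [hTmem] at hw
      obtain ⟨hwm, hw1⟩ := hw
      have hw1' : w - 1 ≠ 0 := sub_ne_zero.mpr hw1
      have hw0 : w ≠ 0 := by
        intro h; rw [h] at hwm; simp [zero_pow hm.ne'] at hwm
      have hzi : g w - I = 2 * I / (w - 1) := by
        rw [hg]; field_simp; ring
      have hzi2 : g w + I = 2 * I * w / (w - 1) := by
        rw [hg]; field_simp; ring
      refine ⟨?_, ?_, ?_⟩
      · intro h
        rw [← sub_eq_zero] at h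
        rw [hzi] at h
        exact (div_ne_zero (by simp) hw1') h
      · intro h
        have : g w + I = 0 := by rw [h]; ring
        rw [hzi2] at this
        exact (div_ne_zero (by simp [hw0, I_ne_zero]) hw1') this
      · rw [hzi, hzi2, div_pow, div_pow, mul_pow (2 * I) w, hwm, mul_one]
  rw [hset]
  rw [Set.ncard_image_of_injOn]
  · rw [hT, Set.ncard_coe_finset, Finset.card_sdiff_of_subset (by
      simpa using Polynomial.one_mem_nthRootsFinset hm),
      (Complex.isPrimitiveRoot_exp m hm.ne').card_nthRootsFinset, Finset.card_singleton]
  · intro w hw w' hw' hww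
    rw [hTmem] at hw hw'
    have h1 : w - 1 ≠ 0 := sub_ne_zero.mpr hw.2
    have h1' : w' - 1 ≠ 0 := sub_ne_zero.mpr hw'.2
    rw [hg] at hww
    simp only [] at hww
    rw [div_eq_div_iff h1 h1'] at hww
    have : (2 : ℂ) * I * (w - w') = 0 := by linear_combination -hww
    have h2 := mul_eq_zero.mp this
    simp only [mul_eq_zero] at h2
    rcases h2 with (h | h)
    · rcases h with h | h
      · norm_num at h
      · exact absurd h I_ne_zero
    · exact sub_eq_zero.mp h

private lemma fce_aux_exp_one (n : ℕ) (θ : ℝ) :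
    Complex.exp (2 * I * ((n : ℂ) + 1) * (θ : ℂ)) = 1 ↔
      ∃ j : ℤ, θ = j * (Real.pi / (n + 1)) := by
  have hn1 : ((n : ℝ) + 1) ≠ 0 := by positivity
  rw [Complex.exp_eq_one_iff]
  constructor
  · rintro ⟨k, hk⟩
    refine ⟨k, ?_⟩
    have h' : ((2 * ((n : ℝ) + 1) * θ : ℝ) : ℂ) * I = ((2 * (k : ℝ) * Real.pi : ℝ) : ℂ) * I := by
      push_cast
      linear_combination hk
    have h2 : 2 * ((n : ℝ) + 1) * θ = 2 * (k : ℝ) * Real.pi :=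
      Complex.ofReal_inj.mp (mul_right_cancel₀ I_ne_zero h')
    field_simp
    linarith
  · rintro ⟨j, rfl⟩
    refine ⟨j, ?_⟩
    push_cast
    have : ((n : ℂ) + 1) ≠ 0 := by exact_mod_cast Complex.ofReal_ne_zero.mpr hn1
    field_simp

private lemma fce_aux_exp_negone (n : ℕ) (θ : ℝ) :
    Complex.exp (2 * I * ((n : ℂ) + 1) * (θ : ℂ)) = -1 ↔
      ∃ j : ℤ, θ = Real.pi / (2 * n + 2) + j * (Real.pi / (n + 1)) := by
  have hn1 : ((n : ℝ) + 1) ≠ 0 := by positivity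
  have hshift : Complex.exp (2 * I * ((n : ℂ) + 1) * (θ : ℂ)) = -1 ↔
      Complex.exp (2 * I * ((n : ℂ) + 1) * (θ : ℂ) + Real.pi * I) = 1 := by
    rw [Complex.exp_add, Complex.exp_pi_mul_I]
    constructor
    · intro h; rw [h]; ring
    · intro h; linear_combination -h
  rw [hshift, Complex.exp_eq_one_iff]
  constructor
  · rintro ⟨k, hk⟩
    refine ⟨k - 1, ?_⟩
    have h' : ((2 * ((n : ℝ) + 1) * θ + Real.pi : ℝ) : ℂ) * I
        = ((2 * (k : ℝ) * Real.pi : ℝ) : ℂ) * I := by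
      push_cast
      linear_combination hk
    have h2 : 2 * ((n : ℝ) + 1) * θ + Real.pi = 2 * (k : ℝ) * Real.pi :=
      Complex.ofReal_inj.mp (mul_right_cancel₀ I_ne_zero h')
    have hd : (2 * ((n : ℝ) + 1)) ≠ 0 := by positivity
    have h4 : θ = (2 * (k : ℝ) - 1) * Real.pi / (2 * ((n : ℝ) + 1)) := by
      rw [eq_div_iff hd]
      linarith [h2]
    rw [h4]
    push_cast
    field_simp
    ring
  · rintro ⟨j, rfl⟩
    refine ⟨j + 1, ?_⟩
    push_cast
    have h1 : ((n : ℂ) + 1) ≠ 0 := by exact_mod_cast Complex.ofReal_ne_zero.mpr hn1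
    have h2 : (2 * (n : ℂ) + 2) ≠ 0 := by
      intro h
      apply h1
      linear_combination h / 2
    field_simp
    ring

end FirstConcreteExampleAux

/-- **The first concrete example (Section 1.3).** For `f(z) = 2i/(z² + 1)`:
the iterated derivatives are
`f⁽ⁿ⁾(z) = (−1)ⁿ·n!·((z − i)^{−(n+1)} − (z + i)^{−(n+1)})`; the zero set of `f⁽ⁿ⁾`
in `ℂ ∖ {i, −i}` is `{tan θ : θ ∈ (−π/2, π/2), exp(2i(n+1)θ) = (−1)^{n+1}}`; it
consists of exactly `n` distinct (real) numbers; and the condition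
`exp(2i(n+1)θ) = (−1)^{n+1}` holds exactly when `θ` is a multiple of `π/(n+1)`
for odd `n`, and exactly when `θ ∈ π/(2n+2) + ℤ·π/(n+1)` for even `n`. -/
theorem first_concrete_example
    (f : ℂ → ℂ) (hf : ∀ z : ℂ, f z = 2 * Complex.I / (z ^ 2 + 1)) :
    ∀ n : ℕ,
      (∀ z : ℂ, z ≠ Complex.I → z ≠ -Complex.I →
        iteratedDeriv n f z = (-1) ^ n * (n.factorial : ℂ) *
          ((z - Complex.I) ^ (-(n + 1 : ℤ)) - (z + Complex.I) ^ (-(n + 1 : ℤ))))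
      ∧ {z : ℂ | (z ≠ Complex.I ∧ z ≠ -Complex.I) ∧ iteratedDeriv n f z = 0}
          = {z : ℂ | ∃ θ : ℝ, -(Real.pi / 2) < θ ∧ θ < Real.pi / 2 ∧
              Complex.exp (2 * Complex.I * ((n : ℂ) + 1) * (θ : ℂ)) = (-1) ^ (n + 1) ∧
              z = (Real.tan θ : ℂ)}
      ∧ {z : ℂ | (z ≠ Complex.I ∧ z ≠ -Complex.I) ∧ iteratedDeriv n f z = 0}.ncard = n
      ∧ (Odd n → ∀ θ : ℝ,
          (Complex.exp (2 * Complex.I * ((n : ℂ) + 1) * (θ : ℂ)) = (-1) ^ (n + 1)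
            ↔ ∃ j : ℤ, θ = j * (Real.pi / (n + 1))))
      ∧ (Even n → ∀ θ : ℝ,
          (Complex.exp (2 * Complex.I * ((n : ℂ) + 1) * (θ : ℂ)) = (-1) ^ (n + 1)
            ↔ ∃ j : ℤ, θ = Real.pi / (2 * n + 2) + j * (Real.pi / (n + 1)))) := by
  intro n
  have hder := fce_aux_deriv f hf n
  have hSchar : {z : ℂ | (z ≠ Complex.I ∧ z ≠ -Complex.I) ∧ iteratedDeriv n f z = 0}
      = {z : ℂ | z ≠ I ∧ z ≠ -I ∧ (z + I) ^ (n + 1) = (z - I) ^ (n + 1)} := by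
    ext z
    simp only [Set.mem_setOf_eq]
    constructor
    · rintro ⟨⟨h1, h2⟩, h0⟩
      refine ⟨h1, h2, (fce_aux_zero n z).mp ?_⟩
      rw [← hder z h1 h2]
      exact h0
    · rintro ⟨h1, h2, h3⟩
      exact ⟨⟨h1, h2⟩, by rw [hder z h1 h2]; exact (fce_aux_zero n z).mpr h3⟩
  refine ⟨hder, ?_, ?_, ?_, ?_⟩
  · rw [hSchar]
    ext z
    simp only [Set.mem_setOf_eq]
    constructor
    · rintro ⟨h1, h2, h3⟩
      have him : z.im = 0 := fce_aux_im (n + 1) n.succ_pos z h3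
      set θ : ℝ := Real.arctan z.re with hθdef
      have hθ1 : -(Real.pi / 2) < θ := (Real.arctan_mem_Ioo z.re).1
      have hθ2 : θ < Real.pi / 2 := (Real.arctan_mem_Ioo z.re).2
      have hzt : z = (Real.tan θ : ℂ) := by
        rw [hθdef, Real.tan_arctan]
        exact Complex.ext (by simp) (by simpa using him)
      have hcos : Real.cos θ ≠ 0 := by
        rw [hθdef, Real.cos_arctan]
        positivity
      refine ⟨θ, hθ1, hθ2, ?_, hzt⟩
      have h4 : ((Real.tan θ : ℂ) + I) ^ (n + 1) = ((Real.tan θ : ℂ) - I) ^ (n + 1) := by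
        rw [← hzt]; exact h3
      have h5 := (fce_aux_tan (n + 1) θ hcos).mp h4
      convert h5 using 2
      push_cast
      ring
    · rintro ⟨θ, hθ1, hθ2, hexp, hz⟩
      have hcos : Real.cos θ ≠ 0 :=
        (Real.cos_pos_of_mem_Ioo ⟨hθ1, hθ2⟩).ne'
      have hexp' : Complex.exp (2 * I * ((n + 1 : ℕ) : ℂ) * (θ : ℂ)) = (-1) ^ (n + 1) := by
        convert hexp using 2
        push_cast
        ring
      have h3 : ((Real.tan θ : ℂ) + I) ^ (n + 1) = ((Real.tan θ : ℂ) - I) ^ (n + 1) :=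
        (fce_aux_tan (n + 1) θ hcos).mpr hexp'
      subst hz
      refine ⟨?_, ?_, h3⟩
      · intro h
        have := congrArg Complex.im h
        simp at this
      · intro h
        have := congrArg Complex.im h
        simp at this
  · rw [hSchar, fce_aux_count (n + 1) n.succ_pos]
    simp
  · intro hn θ
    rw [Even.neg_one_pow hn.add_one]
    exact fce_aux_exp_one n θ
  · intro hn θ
    rw [Odd.neg_one_pow hn.add_one]
    exact fce_aux_exp_negone n θ
end
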